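/- arXiv:2003.12964 — 8 statements merged into one kernel-verified Lean document; each statement's English description precedes it below -/
import Mathlib

section
/- For every topological space X there exist a completely regular Hausdorff (Tychonoff) space Y and a ring isomorphism Ψ from B_1(Y) onto B_1(X) such that the restriction of Ψ to B_1*(Y) is a ring isomorphism onto B_1*(X). -/
open Filter Topology

/-- The ring of Baire one (pointwise limits of sequences of continuous) real-valued
functions on a topological space, as a subring of `X → ℝ`. -/
def baireOne (X : Type*) [TopologicalSpace X] : Subring (X → ℝ) where
  carrier := {f | ∃ F : ℕ → C(X, ℝ), ∀ x, Tendsto (fun n => F n x) atTop (𝓝 (f x))}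
  zero_mem' := ⟨fun _ => 0, fun x => by simpa using tendsto_const_nhds⟩
  one_mem' := ⟨fun _ => 1, fun x => by simpa using tendsto_const_nhds⟩
  add_mem' := by
    rintro f g ⟨F, hF⟩ ⟨G, hG⟩
    exact ⟨fun n => F n + G n, fun x => by simpa using (hF x).add (hG x)⟩
  mul_mem' := by
    rintro f g ⟨F, hF⟩ ⟨G, hG⟩
    exact ⟨fun n => F n * G n, fun x => by simpa using (hF x).mul (hG x)⟩
  neg_mem' := by
    rintro f ⟨F, hF⟩
    exact ⟨fun n => -F n, fun x => by simpa using (hF x).neg⟩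
/-- The subring of bounded Baire one real-valued functions. -/
def baireOneStar (X : Type*) [TopologicalSpace X] : Subring (X → ℝ) where
  carrier := {f | f ∈ baireOne X ∧ ∃ C : ℝ, ∀ x, |f x| ≤ C}
  zero_mem' := ⟨(baireOne X).zero_mem, 0, by simp⟩
  one_mem' := ⟨(baireOne X).one_mem, 1, by simp⟩
  add_mem' := by
    rintro f g ⟨hf, C, hC⟩ ⟨hg, D, hD⟩
    exact ⟨(baireOne X).add_mem hf hg, C + D, fun x =>
      (abs_add_le _ _).trans (add_le_add (hC x) (hD x))⟩
  mul_mem' := by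
    rintro f g ⟨hf, C, hC⟩ ⟨hg, D, hD⟩
    refine ⟨(baireOne X).mul_mem hf hg, C * D, fun x => ?_⟩
    rw [Pi.mul_apply, abs_mul]
    exact mul_le_mul (hC x) (hD x) (abs_nonneg _) ((abs_nonneg _).trans (hC x))
  neg_mem' := by
    rintro f ⟨hf, C, hC⟩
    exact ⟨(baireOne X).neg_mem hf, C, fun x => by simpa using hC x⟩

/-- Any subspace of a product of copies of `ℝ` is completely regular. -/
lemma completelyRegular_subtype_pi {ι : Type*} (S : Set (ι → ℝ)) :
    CompletelyRegularSpace S := by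
  constructor
  intro x K hK hx
  obtain ⟨W, hW, hWK⟩ : ∃ W, IsOpen W ∧ Kᶜ = Subtype.val ⁻¹' W := by
    simpa [eq_comm] using isOpen_induced_iff.mp hK.isOpen_compl
  have hxW : (x : ι → ℝ) ∈ W := by
    have : x ∈ Kᶜ := hx
    rwa [hWK] at this
  obtain ⟨I, u, hu, hsub⟩ := isOpen_pi_iff.mp hW x.val hxW
  let π : S → ({i // i ∈ I} → ℝ) := fun z i => (z : ι → ℝ) i.1
  have hπ : Continuous π :=
    continuous_pi fun i => (continuous_apply i.1).comp continuous_subtype_val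
  let V : Set ({i // i ∈ I} → ℝ) := Set.univ.pi fun i => u i.1
  have hVopen : IsOpen V := isOpen_set_pi Set.finite_univ fun i _ => (hu i.1 i.2).1
  have hxV : π x ∈ V := fun i _ => (hu i.1 i.2).2
  obtain ⟨f, cf, hf0, hfK⟩ :=
    CompletelyRegularSpace.completely_regular (π x) Vᶜ hVopen.isClosed_compl
      (by simpa using hxV)
  refine ⟨f ∘ π, cf.comp hπ, hf0, fun y hy => ?_⟩
  refine hfK ?_
  intro hyV
  have hmem : (y : ι → ℝ) ∈ (I : Set ι).pi u := fun i hi => hyV ⟨i, hi⟩ trivial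
  have : y ∈ Kᶜ := by rw [hWK]; exact hsub hmem
  exact this hy

universe u

/-- M. H. Stone's theorem for `B₁`: for every topological space `X` there is a Tychonoff
(completely regular Hausdorff) space `Y` and a ring isomorphism `Ψ : B₁(Y) ≃+* B₁(X)`
whose restriction to the bounded Baire one functions is a ring isomorphism of
`B₁*(Y)` onto `B₁*(X)`. -/
theorem stone_theorem_for_baireOne (X : Type u) [TopologicalSpace X] :
    ∃ (Y : Type u) (tY : TopologicalSpace Y),
      @CompletelyRegularSpace Y tY ∧ @T2Space Y tY ∧
      ∃ Ψ : ↥(@baireOne Y tY) ≃+* ↥(baireOne X),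
        ∀ f : ↥(@baireOne Y tY),
          ((f : Y → ℝ) ∈ @baireOneStar Y tY ↔ ((Ψ f : X → ℝ) ∈ baireOneStar X)) := by
  classical
  set e : X → (C(X, ℝ) → ℝ) := fun x f => f x with he
  set Y := ↥(Set.range e) with hY
  refine ⟨Y, inferInstance, completelyRegular_subtype_pi _, inferInstance, ?_⟩
  have heC : Continuous e := continuous_pi fun f => f.continuous
  let eY : C(X, Y) := ⟨fun x => ⟨e x, Set.mem_range_self x⟩, heC.subtype_mk _⟩
  -- if `e x = e x'` then every Baire one function agrees at `x` and `x'`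
  have key : ∀ (f : ↥(baireOne X)) {x x' : X}, e x = e x' → (f : X → ℝ) x = (f : X → ℝ) x' := by
    rintro ⟨f, F, hF⟩ x x' hxx
    have hFxx : ∀ n, F n x = F n x' := fun n => congrFun hxx (F n)
    refine tendsto_nhds_unique (hF x) ?_
    simpa [hFxx] using hF x'
  have hmem : ∀ g : ↥(baireOne Y), (fun x => (g : Y → ℝ) (eY x)) ∈ baireOne X := by
    rintro ⟨g, G, hG⟩
    exact ⟨fun n => (G n).comp eY, fun x => hG (eY x)⟩
  let Φ : ↥(baireOne Y) →+* ↥(baireOne X) :=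
    { toFun := fun g => ⟨fun x => (g : Y → ℝ) (eY x), hmem g⟩
      map_one' := rfl
      map_mul' := fun _ _ => rfl
      map_zero' := rfl
      map_add' := fun _ _ => rfl }
  have hinj : Function.Injective Φ := by
    intro g g' h
    ext y
    obtain ⟨x, hx⟩ := y.2
    have : eY x = y := Subtype.ext hx
    rw [← this]
    exact congrFun (congrArg Subtype.val h) x
  have hsurj : Function.Surjective Φ := by
    intro f
    obtain ⟨F, hF⟩ := f.2
    refine ⟨⟨fun y => (f : X → ℝ) (Classical.choose y.2), ?_⟩, ?_⟩
    · refine ⟨fun n => ⟨fun y => (y : C(X, ℝ) → ℝ) (F n),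
        (continuous_apply (F n)).comp continuous_subtype_val⟩, fun y => ?_⟩
      have hy := Classical.choose_spec y.2
      simp only [ContinuousMap.coe_mk]
      have : ∀ n, (y : C(X, ℝ) → ℝ) (F n) = F n (Classical.choose y.2) := fun n =>
        (congrFun hy (F n)).symm
      simpa [this] using hF (Classical.choose y.2)
    · apply Subtype.ext
      funext x
      exact key f (Classical.choose_spec (eY x).2)
  refine ⟨RingEquiv.ofBijective Φ ⟨hinj, hsurj⟩, ?_⟩
  intro f
  constructor
  · rintro ⟨hf, C, hC⟩
    exact ⟨(Φ f).2, C, fun x => hC (eY x)⟩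
  · rintro ⟨hf, C, hC⟩
    refine ⟨f.2, C, fun y => ?_⟩
    obtain ⟨x, hx⟩ := y.2
    have hyx : eY x = y := Subtype.ext hx
    calc |(f : Y → ℝ) y| = |(f : Y → ℝ) (eY x)| := by rw [hyx]
      _ ≤ C := hC x
end

section
/- For every topological space X there exist a completely regular Hausdorff (Tychonoff) space Y and a ring isomorphism Ψ from B_1(Y) onto B_1(X) that is also a lattice (order) isomorphism: for all f, g ∈ B_1(Y), f ≤ g pointwise if and only if Ψ(f) ≤ Ψ(g) pointwise. -/
open Filter Topology

section Topology

open Set unitInterval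

/-- Complete regularity is inherited along inducing maps. -/
lemma completelyRegularSpace_of_isInducing {Y Z : Type*} [TopologicalSpace Y]
    [TopologicalSpace Z] [CompletelyRegularSpace Z] (e : Y → Z) (he : Topology.IsInducing e) :
    CompletelyRegularSpace Y := by
  constructor
  intro x K hK hx
  obtain ⟨U, hU, hKU⟩ := he.isOpen_iff.mp hK.isOpen_compl
  have hxU : e x ∈ U := by
    have : x ∈ e ⁻¹' U := hKU ▸ hx
    exact this
  obtain ⟨f, cf, hf0, hf1⟩ :=
    CompletelyRegularSpace.completely_regular (e x) Uᶜ hU.isClosed_compl (by simpa using hxU)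
  refine ⟨f ∘ e, cf.comp he.continuous, hf0, fun k hk => ?_⟩
  have : e k ∈ Uᶜ := by
    intro hmem
    exact (hKU ▸ (show k ∈ e ⁻¹' U from hmem)) hk
  exact hf1 this

/-- A product of completely regular spaces is completely regular. -/
lemma Pi.completelyRegularSpace' {ι : Type*} {π : ι → Type*} [∀ i, TopologicalSpace (π i)]
    [∀ i, CompletelyRegularSpace (π i)] : CompletelyRegularSpace (∀ i, π i) := by
  constructor
  intro x K hK hx
  obtain ⟨F, u, hu, hsub⟩ := isOpen_pi_iff.mp hK.isOpen_compl x hx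
  have H : ∀ i : F, ∃ f : π i → I, Continuous f ∧ f (x i) = 0 ∧ EqOn f 1 (u i)ᶜ := fun i =>
    CompletelyRegularSpace.completely_regular (x i.1) (u i.1)ᶜ (hu i.1 i.2).1.isClosed_compl
      (by simp [(hu i.1 i.2).2])
  choose f cf hf0 hf1 using H
  set g : (∀ i, π i) → ℝ := fun y => min 1 (∑ i ∈ F.attach, (f i (y i) : ℝ)) with hg
  have hsum_nonneg : ∀ y : ∀ i, π i, 0 ≤ ∑ i ∈ F.attach, (f i (y i.1) : ℝ) := fun y =>
    Finset.sum_nonneg fun i _ => (f i (y i.1)).2.1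
  have hmem : ∀ y : ∀ i, π i, g y ∈ I := fun y =>
    ⟨le_min zero_le_one (hsum_nonneg y), min_le_left _ _⟩
  refine ⟨fun y => ⟨g y, hmem y⟩, ?_, ?_, ?_⟩
  · refine Continuous.subtype_mk ?_ _
    exact continuous_const.min <| continuous_finset_sum _ fun i _ =>
      continuous_subtype_val.comp ((cf i).comp (continuous_apply i.1))
  · apply Subtype.ext
    have : ∀ i ∈ F.attach, (f i (x i) : ℝ) = 0 := fun i _ => by rw [hf0 i]; rfl
    simp [hg, Finset.sum_eq_zero this]
  · intro k hk
    apply Subtype.ext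
    have hk' : k ∉ (↑F : Set ι).pi u := fun h => (hsub h) hk
    obtain ⟨i, hiF, hiu⟩ := by simpa [Set.mem_pi] using hk'
    have h1 : (f ⟨i, hiF⟩ (k i) : ℝ) = 1 := by rw [hf1 ⟨i, hiF⟩ hiu]; rfl
    have : (1 : ℝ) ≤ ∑ j ∈ F.attach, (f j (k j) : ℝ) := by
      refine h1 ▸ Finset.single_le_sum (fun j _ => (f j (k j)).2.1) (Finset.mem_attach _ _)
    simp [hg, min_eq_left this]

end Topology

section Main

universe v

variable (X : Type v) [TopologicalSpace X]

/-- The canonical map into the product `C(X,ℝ) → ℝ`. -/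
def stIota : X → (C(X, ℝ) → ℝ) := fun x f => f x

/-- The Tychonoff replacement of `X`: the range of `stIota` in the product. -/
def stY : Type v := ↥(Set.range (stIota X))

instance : TopologicalSpace (stY X) := by unfold stY; infer_instance

instance : T2Space (stY X) := by unfold stY; infer_instance

instance : CompletelyRegularSpace (stY X) := by
  have : CompletelyRegularSpace (C(X, ℝ) → ℝ) := Pi.completelyRegularSpace'
  exact completelyRegularSpace_of_isInducing
    (Subtype.val : stY X → (C(X, ℝ) → ℝ)) Topology.IsInducing.subtypeVal

/-- The corestriction of `stIota`. -/
def stE : X → stY X := fun x => ⟨stIota X x, ⟨x, rfl⟩⟩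

lemma stE_continuous : Continuous (stE X) :=
  Continuous.subtype_mk (continuous_pi fun f => f.continuous) _

lemma stE_surjective : Function.Surjective (stE X) := by
  rintro ⟨y, x, rfl⟩
  exact ⟨x, rfl⟩

/-- If `stIota` identifies two points, every Baire-one function agrees on them. -/
lemma baireOne_eq_of_stIota_eq {x x' : X} (h : stIota X x = stIota X x')
    (f : X → ℝ) (hf : f ∈ baireOne X) : f x = f x' := by
  obtain ⟨F, hF⟩ := hf
  have hFeq : ∀ n, F n x = F n x' := fun n => congrFun h (F n)
  have h1 : Tendsto (fun n => F n x) atTop (𝓝 (f x')) := by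
    simpa [hFeq] using hF x'
  exact tendsto_nhds_unique (hF x) h1

lemma stMap_mem (g : stY X → ℝ) (hg : g ∈ baireOne (stY X)) :
    g ∘ stE X ∈ baireOne X := by
  obtain ⟨G, hG⟩ := hg
  exact ⟨fun n => (G n).comp ⟨stE X, stE_continuous X⟩, fun x => hG (stE X x)⟩

/-- The pullback ring homomorphism `B₁(Y) →+* B₁(X)`. -/
def stPhi : ↥(baireOne (stY X)) →+* ↥(baireOne X) where
  toFun g := ⟨(g : stY X → ℝ) ∘ stE X, stMap_mem X _ g.2⟩
  map_one' := rfl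
  map_mul' _ _ := rfl
  map_zero' := rfl
  map_add' _ _ := rfl

lemma stPhi_injective : Function.Injective (stPhi X) := by
  rintro ⟨g, hg⟩ ⟨g', hg'⟩ h
  have h' : (g : stY X → ℝ) ∘ stE X = (g' : stY X → ℝ) ∘ stE X := congrArg Subtype.val h
  ext y
  obtain ⟨x, rfl⟩ := stE_surjective X y
  exact congrFun h' x

lemma stPhi_surjective : Function.Surjective (stPhi X) := by
  rintro ⟨f, hf⟩
  set g : stY X → ℝ := fun y => f (Classical.choose y.2) with hgdef
  have hkey : ∀ x : X, g (stE X x) = f x := by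
    intro x
    have hspec : stIota X (Classical.choose (stE X x).2) = stIota X x :=
      Classical.choose_spec (stE X x).2
    exact baireOne_eq_of_stIota_eq X hspec f hf
  obtain ⟨F, hF⟩ := hf
  have hgmem : g ∈ baireOne (stY X) := by
    refine ⟨fun n => ⟨fun y => y.1 (F n), (continuous_apply (F n)).comp continuous_subtype_val⟩,
      fun y => ?_⟩
    have hspec : stIota X (Classical.choose y.2) = y.1 := Classical.choose_spec y.2
    have : ∀ n, y.1 (F n) = F n (Classical.choose y.2) := fun n => (congrFun hspec (F n)).symm
    simpa [this] using hF (Classical.choose y.2)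
  refine ⟨⟨g, hgmem⟩, ?_⟩
  apply Subtype.ext
  funext x
  exact hkey x

end Main

/-- For every topological space `X` there is a Tychonoff (completely regular Hausdorff)
space `Y` and a ring isomorphism `Ψ : B₁(Y) ≃+* B₁(X)` which is simultaneously a lattice
(order) isomorphism for the pointwise orders. -/
theorem stone_theorem_lattice_iso (X : Type u) [TopologicalSpace X] :
    ∃ (Y : Type u) (tY : TopologicalSpace Y),
      @CompletelyRegularSpace Y tY ∧ @T2Space Y tY ∧
      ∃ Ψ : ↥(@baireOne Y tY) ≃+* ↥(baireOne X),
        ∀ f g : ↥(@baireOne Y tY),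
          ((∀ y : Y, (f : Y → ℝ) y ≤ (g : Y → ℝ) y) ↔
            (∀ x : X, (Ψ f : X → ℝ) x ≤ (Ψ g : X → ℝ) x)) := by
  refine ⟨stY X, inferInstance, inferInstance, inferInstance, ?_⟩
  refine ⟨RingEquiv.ofBijective (stPhi X) ⟨stPhi_injective X, stPhi_surjective X⟩, ?_⟩
  intro f g
  constructor
  · intro h x
    exact h (stE X x)
  · intro h y
    obtain ⟨x, rfl⟩ := stE_surjective X y
    exact h x
end

section
/- Let X be a Tychonoff space. The map sending a maximal ideal M of B_1(X) to Z[M] = {Z(f) : f ∈ M} is a homeomorphism from the structure space M(B_1(X)) (with the hull-kernel topology) onto the set of all Z_B-ultrafilters on X equipped with the Stone topology. -/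
open Filter Topology

/-- The structure space of a commutative ring: the set of its maximal ideals. -/
def StructSpace (R : Type*) [CommRing R] : Type _ := {I : Ideal R // I.IsMaximal}

/-- The hull-kernel topology on the structure space, whose closed sets are generated by
the base `{M | f ∈ M}`, `f ∈ R`. -/
instance (R : Type*) [CommRing R] : TopologicalSpace (StructSpace R) :=
  TopologicalSpace.generateFrom {U : Set (StructSpace R) | ∃ f : R, U = {M | f ∉ M.1}}
/-- The zero sets of Baire one functions. -/
def zSets (X : Type*) [TopologicalSpace X] : Set (Set X) :=
  {Z | ∃ f ∈ baireOne X, Z = {x | f x = 0}}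

/-- A `Z_B`-filter on `X`. -/
def IsZBFilter {X : Type*} [TopologicalSpace X] (F : Set (Set X)) : Prop :=
  F.Nonempty ∧ F ⊆ zSets X ∧ ∅ ∉ F ∧ (∀ Z₁ ∈ F, ∀ Z₂ ∈ F, Z₁ ∩ Z₂ ∈ F) ∧
    ∀ Z ∈ F, ∀ Z' ∈ zSets X, Z ⊆ Z' → Z' ∈ F

/-- A `Z_B`-ultrafilter on `X`: a maximal `Z_B`-filter. -/
def IsZBUltrafilter {X : Type*} [TopologicalSpace X] (F : Set (Set X)) : Prop :=
  IsZBFilter F ∧ ∀ G : Set (Set X), IsZBFilter G → F ⊆ G → F = G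

/-- The set of `Z_B`-ultrafilters on `X`. -/
def ZBUltra (X : Type*) [TopologicalSpace X] : Type _ := {F : Set (Set X) // IsZBUltrafilter F}

/-- The Stone topology on the set of `Z_B`-ultrafilters, whose closed sets are generated
by the base `Z̄ = {U | Z ∈ U}`, `Z ∈ Z(B₁(X))`. -/
instance (X : Type*) [TopologicalSpace X] : TopologicalSpace (ZBUltra X) :=
  TopologicalSpace.generateFrom
    {V : Set (ZBUltra X) | ∃ Z ∈ zSets X, V = {U | Z ∉ U.1}}

section Aux

variable {X : Type*} [TopologicalSpace X]

/-- Zero set of a Baire one function. -/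
def ZS (f : ↥(baireOne X)) : Set X := {x | (f : X → ℝ) x = 0}

lemma zs_mem_zSets (f : ↥(baireOne X)) : ZS f ∈ zSets X := ⟨f, f.2, rfl⟩

lemma zSets_eq (Z : Set X) (hZ : Z ∈ zSets X) : ∃ f : ↥(baireOne X), Z = ZS f := by
  obtain ⟨f, hf, rfl⟩ := hZ; exact ⟨⟨f, hf⟩, rfl⟩

lemma ZS_apply (f : ↥(baireOne X)) (x : X) : x ∈ ZS f ↔ (f : X → ℝ) x = 0 := Iff.rfl

lemma ZS_zero : ZS (0 : ↥(baireOne X)) = Set.univ := by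
  ext x; simp [ZS]

lemma ZS_mul (f g : ↥(baireOne X)) : ZS (f * g) = ZS f ∪ ZS g := by
  ext x; simp [ZS, mul_eq_zero]

lemma ZS_sq_add_sq (f g : ↥(baireOne X)) : ZS (f * f + g * g) = ZS f ∩ ZS g := by
  ext x
  simp only [ZS, Set.mem_setOf_eq, Set.mem_inter_iff, Subring.coe_add, Subring.coe_mul,
    Pi.add_apply, Pi.mul_apply]
  constructor
  · intro h
    have h1 := (add_eq_zero_iff_of_nonneg (mul_self_nonneg _) (mul_self_nonneg _)).1 h
    exact ⟨mul_self_eq_zero.1 h1.1, mul_self_eq_zero.1 h1.2⟩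
  · rintro ⟨h1, h2⟩; rw [h1, h2]; ring

lemma ZS_add_supset (f g : ↥(baireOne X)) : ZS f ∩ ZS g ⊆ ZS (f + g) := by
  rintro x ⟨h1, h2⟩
  simp only [ZS, Set.mem_setOf_eq] at *
  simp [Subring.coe_add, h1, h2]

/-- A nonvanishing Baire one function is a unit in the ring of Baire one functions. -/
lemma isUnit_of_nonvanishing (f : ↥(baireOne X)) (hf : ∀ x, (f : X → ℝ) x ≠ 0) :
    IsUnit f := by
  obtain ⟨F, hF⟩ := f.2
  have hg : (fun x => ((f : X → ℝ) x)⁻¹) ∈ baireOne X := by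
    refine ⟨fun n => ⟨fun x => F n x / ((F n x) ^ 2 + 1 / (n + 1)), ?_⟩, ?_⟩
    · exact (F n).continuous.div (((F n).continuous.pow 2).add continuous_const)
        (fun x => by positivity)
    · intro x
      have h1 : Tendsto (fun n : ℕ => (1 : ℝ) / (n + 1)) atTop (𝓝 0) :=
        tendsto_one_div_add_atTop_nhds_zero_nat
      have hden : Tendsto (fun n => (F n x) ^ 2 + 1 / ((n : ℝ) + 1)) atTop
          (𝓝 ((f : X → ℝ) x ^ 2)) := by
        simpa using ((hF x).pow 2).add h1
      have := (hF x).div hden (pow_ne_zero 2 (hf x))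
      have e : (f : X → ℝ) x / (f : X → ℝ) x ^ 2 = ((f : X → ℝ) x)⁻¹ := by
        rw [sq, div_mul_eq_div_div, div_self (hf x), one_div]
      rw [e] at this
      exact this
  refine IsUnit.of_mul_eq_one (a := f) ⟨_, hg⟩ (Subtype.ext (funext fun x => ?_))
  simp only [Subring.coe_mul, Pi.mul_apply, Subring.coe_one, Pi.one_apply]
  exact mul_inv_cancel₀ (hf x)

/-- `Z[I]`, the image of an ideal under `Z`. -/
def ZM (I : Ideal ↥(baireOne X)) : Set (Set X) := {Z | ∃ f ∈ I, Z = ZS f}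

lemma zm_isZBFilter (I : Ideal ↥(baireOne X)) (hI : I ≠ ⊤) : IsZBFilter (ZM I) := by
  refine ⟨⟨ZS 0, 0, I.zero_mem, rfl⟩, ?_, ?_, ?_, ?_⟩
  · rintro Z ⟨f, _, rfl⟩; exact zs_mem_zSets f
  · rintro ⟨f, hfI, hf⟩
    have : ∀ x, (f : X → ℝ) x ≠ 0 := by
      intro x hx
      exact absurd (show x ∈ (∅ : Set X) by rw [hf]; exact hx) (Set.notMem_empty x)
    exact hI (I.eq_top_of_isUnit_mem hfI (isUnit_of_nonvanishing f this))
  · rintro Z₁ ⟨f, hf, rfl⟩ Z₂ ⟨g, hg, rfl⟩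
    exact ⟨f * f + g * g, I.add_mem (I.mul_mem_left f hf) (I.mul_mem_left g hg),
      (ZS_sq_add_sq f g).symm⟩
  · rintro Z ⟨f, hf, rfl⟩ Z' hZ' hsub
    obtain ⟨g, rfl⟩ := zSets_eq Z' hZ'
    exact ⟨f * g, I.mul_mem_right g hf, by rw [ZS_mul, Set.union_eq_right.mpr hsub]⟩

lemma univ_mem_zbFilter {G : Set (Set X)} (hG : IsZBFilter G) : Set.univ ∈ G := by
  obtain ⟨Z, hZ⟩ := hG.1
  refine hG.2.2.2.2 Z hZ Set.univ ?_ (Set.subset_univ Z)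
  rw [← ZS_zero (X := X)]
  exact zs_mem_zSets 0

/-- `Z⁻¹[G]`, as an ideal of `B₁(X)`. -/
def zinvIdeal (G : Set (Set X)) (hG : IsZBFilter G) : Ideal ↥(baireOne X) where
  carrier := {f | ZS f ∈ G}
  zero_mem' := by simpa [ZS_zero] using univ_mem_zbFilter hG
  add_mem' := by
    intro f g hf hg
    exact hG.2.2.2.2 _ (hG.2.2.2.1 _ hf _ hg) _ (zs_mem_zSets (f + g)) (ZS_add_supset f g)
  smul_mem' := by
    intro c f hf
    refine hG.2.2.2.2 _ hf _ (zs_mem_zSets (c * f)) ?_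
    rw [smul_eq_mul, ZS_mul]; exact Set.subset_union_right

lemma zinvIdeal_ne_top (G : Set (Set X)) (hG : IsZBFilter G) : zinvIdeal G hG ≠ ⊤ := by
  intro h
  have h1 : (1 : ↥(baireOne X)) ∈ zinvIdeal G hG := h ▸ Submodule.mem_top
  have : ZS (1 : ↥(baireOne X)) = ∅ := by
    ext x; simp [ZS]
  exact hG.2.2.1 (this ▸ h1)

lemma mem_zinvIdeal {G : Set (Set X)} {hG : IsZBFilter G} {f : ↥(baireOne X)} :
    f ∈ zinvIdeal G hG ↔ ZS f ∈ G := Iff.rfl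

lemma le_zinvIdeal_of_zm_subset {I : Ideal ↥(baireOne X)} {G : Set (Set X)}
    (hG : IsZBFilter G) (h : ZM I ⊆ G) : I ≤ zinvIdeal G hG :=
  fun f hf => h ⟨f, hf, rfl⟩

/-- For a maximal ideal `M`, `Z⁻¹[Z[M]] = M`. -/
lemma zinv_zm_eq {M : Ideal ↥(baireOne X)} (hM : M.IsMaximal) :
    zinvIdeal (ZM M) (zm_isZBFilter M hM.ne_top) = M :=
  (hM.eq_of_le (zinvIdeal_ne_top _ _)
    (le_zinvIdeal_of_zm_subset _ (le_refl (ZM M)))).symm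

lemma mem_max_iff_zs_mem {M : Ideal ↥(baireOne X)} (hM : M.IsMaximal)
    (f : ↥(baireOne X)) : f ∈ M ↔ ZS f ∈ ZM M := by
  constructor
  · exact fun h => ⟨f, h, rfl⟩
  · intro h
    have := zinv_zm_eq hM
    rw [← this]; exact h

/-- For a maximal ideal `M`, `Z[M]` is a `Z_B`-ultrafilter. -/
lemma zm_isZBUltrafilter {M : Ideal ↥(baireOne X)} (hM : M.IsMaximal) :
    IsZBUltrafilter (ZM M) := by
  refine ⟨zm_isZBFilter M hM.ne_top, fun G hG hsub => ?_⟩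
  have hMle : M ≤ zinvIdeal G hG := le_zinvIdeal_of_zm_subset hG hsub
  have hEq : M = zinvIdeal G hG := hM.eq_of_le (zinvIdeal_ne_top G hG) hMle
  refine Set.Subset.antisymm hsub (fun Z hZ => ?_)
  obtain ⟨f, rfl⟩ := zSets_eq Z (hG.2.1 hZ)
  exact ⟨f, hEq ▸ hZ, rfl⟩

/-- For a `Z_B`-ultrafilter `U`, `Z[Z⁻¹[U]] = U`. -/
lemma zm_zinv_eq {U : Set (Set X)} (hU : IsZBUltrafilter U) :
    ZM (zinvIdeal U hU.1) = U := by
  have hsub : U ⊆ ZM (zinvIdeal U hU.1) := by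
    intro Z hZ
    obtain ⟨f, rfl⟩ := zSets_eq Z (hU.1.2.1 hZ)
    exact ⟨f, hZ, rfl⟩
  exact (hU.2 _ (zm_isZBFilter _ (zinvIdeal_ne_top U hU.1)) hsub).symm

/-- For a `Z_B`-ultrafilter `U`, `Z⁻¹[U]` is a maximal ideal. -/
lemma zinvIdeal_isMaximal {U : Set (Set X)} (hU : IsZBUltrafilter U) :
    (zinvIdeal U hU.1).IsMaximal := by
  refine ⟨⟨zinvIdeal_ne_top U hU.1, fun J hJ => ?_⟩⟩
  by_contra hJtop
  have hJfil : IsZBFilter (ZM J) := zm_isZBFilter J hJtop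
  have hsub : U ⊆ ZM J := by
    rw [← zm_zinv_eq hU]
    rintro Z ⟨f, hf, rfl⟩
    exact ⟨f, hJ.le hf, rfl⟩
  have hEq : U = ZM J := hU.2 _ hJfil hsub
  obtain ⟨f, hfJ, hfnot⟩ := SetLike.exists_of_lt hJ
  exact hfnot (show ZS f ∈ U from hEq ▸ ⟨f, hfJ, rfl⟩)

end Aux

/-- For a Tychonoff space `X`, the map `M ↦ Z[M] = {Z(f) : f ∈ M}` is a homeomorphism of
the structure space of `B₁(X)` (with the hull-kernel topology) onto the space of
`Z_B`-ultrafilters on `X` (with the Stone topology). -/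
theorem structSpace_homeomorph_zbUltrafilters
    (X : Type*) [TopologicalSpace X] [CompletelyRegularSpace X] [T2Space X] :
    ∃ h : StructSpace ↥(baireOne X) ≃ₜ ZBUltra X,
      ∀ M : StructSpace ↥(baireOne X),
        ((h M).1 : Set (Set X)) =
          {Z | ∃ f ∈ (M.1 : Set ↥(baireOne X)), Z = {x | (f : X → ℝ) x = 0}} := by
  classical
  -- the forward and inverse maps
  let e : StructSpace ↥(baireOne X) ≃ ZBUltra X :=
    { toFun := fun M => ⟨ZM M.1, zm_isZBUltrafilter M.2⟩
      invFun := fun U => ⟨zinvIdeal U.1 U.2.1, zinvIdeal_isMaximal U.2⟩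
      left_inv := fun M => Subtype.ext (zinv_zm_eq M.2)
      right_inv := fun U => Subtype.ext (zm_zinv_eq U.2) }
  have hcont : Continuous e := by
    refine continuous_generateFrom_iff.mpr ?_
    rintro V ⟨Z, hZ, rfl⟩
    obtain ⟨f, rfl⟩ := zSets_eq Z hZ
    have : e ⁻¹' {U : ZBUltra X | ZS f ∉ U.1} = {M : StructSpace ↥(baireOne X) | f ∉ M.1} := by
      ext M
      simp only [Set.mem_preimage, Set.mem_setOf_eq, e]
      exact not_congr (mem_max_iff_zs_mem M.2 f).symm
    rw [this]
    exact TopologicalSpace.GenerateOpen.basic _ ⟨f, rfl⟩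
  have hcont' : Continuous e.symm := by
    refine continuous_generateFrom_iff.mpr ?_
    rintro V ⟨f, rfl⟩
    have : e.symm ⁻¹' {M : StructSpace ↥(baireOne X) | f ∉ M.1} =
        {U : ZBUltra X | ZS f ∉ U.1} := by
      ext U
      simp only [Set.mem_preimage, Set.mem_setOf_eq, e, Equiv.coe_fn_symm_mk]
      exact not_congr (mem_zinvIdeal (hG := U.2.1))
    rw [this]
    exact TopologicalSpace.GenerateOpen.basic _ ⟨ZS f, zs_mem_zSets f, rfl⟩
  refine ⟨{ toEquiv := e, continuous_toFun := hcont, continuous_invFun := hcont' }, fun M => ?_⟩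
  rfl
end

section
/- Let X be a T_4 space (normal and Hausdorff). The map ψ : X → M(B_1(X)) given by ψ(x) = M_x = {f ∈ B_1(X) : f(x) = 0} satisfies: (i) ψ is injective; (ii) for every f ∈ B_1(X), ψ⁻¹(M̂_f) = Z(f), which is a G_δ subset of X (so ψ pulls back every basic closed set of M(B_1(X)) to a G_δ set); (iii) the inverse map ψ⁻¹ : ψ(X) → X is continuous, where ψ(X) carries the subspace topology; and (iv) ψ(X) is dense in M(B_1(X)). That is, X is densely weak F_σ-embedded in M(B_1(X)). -/
open Filter Topology

namespace BaireAux

variable {X : Type*} [TopologicalSpace X]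

lemma continuous_mem (f : C(X, ℝ)) : (f : X → ℝ) ∈ baireOne X :=
  ⟨fun _ => f, fun x => tendsto_const_nhds⟩

def evalHom (x : X) : ↥(baireOne X) →+* ℝ :=
  (Pi.evalRingHom (fun _ => ℝ) x).comp (baireOne X).subtype

lemma evalHom_surjective (x : X) : Function.Surjective (evalHom x) := fun r =>
  ⟨⟨fun _ => r, ⟨fun _ => ContinuousMap.const X r, fun _ => tendsto_const_nhds⟩⟩, rfl⟩

def psi (x : X) : StructSpace ↥(baireOne X) :=
  ⟨RingHom.ker (evalHom x), RingHom.ker_isMaximal_of_surjective _ (evalHom_surjective x)⟩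

lemma mem_psi_iff (x : X) (f : ↥(baireOne X)) : f ∈ (psi x).1 ↔ (f : X → ℝ) x = 0 := by
  simp [psi, RingHom.mem_ker, evalHom]

lemma psi_coe (x : X) :
    (((psi (X := X) x).1 : Ideal ↥(baireOne X)) : Set ↥(baireOne X)) =
      {f : ↥(baireOne X) | (f : X → ℝ) x = 0} := by
  ext f; simpa using mem_psi_iff x f

lemma isGdelta_zero (f : ↥(baireOne X)) : IsGδ {x : X | (f : X → ℝ) x = 0} := by
  obtain ⟨F, hF⟩ := f.2
  have key : {x : X | (f : X → ℝ) x = 0} =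
      ⋂ p : ℕ × ℕ, (⋂ n ∈ {n | p.2 ≤ n}, {x : X | 1 / (p.1 + 1 : ℝ) ≤ |F n x|})ᶜ := by
    ext x
    simp only [Set.mem_setOf_eq, Set.mem_iInter, Set.mem_compl_iff, Prod.forall]
    constructor
    · intro hx k N hmem
      have h1 : (1 : ℝ) / (k + 1) ≤ |(f : X → ℝ) x| := by
        refine ge_of_tendsto ((hF x).abs) ?_
        filter_upwards [eventually_atTop.2 ⟨N, fun n hn => hmem n hn⟩] with n hn using hn
      rw [hx, abs_zero] at h1
      have : (0 : ℝ) < 1 / (k + 1) := by positivity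
      linarith
    · intro h
      by_contra hx
      have habs : (0 : ℝ) < |(f : X → ℝ) x| := abs_pos.2 hx
      obtain ⟨k, hk⟩ := exists_nat_one_div_lt habs
      have hev : ∀ᶠ n in atTop, 1 / (k + 1 : ℝ) < |F n x| :=
        ((hF x).abs).eventually (eventually_gt_nhds hk)
      obtain ⟨N, hN⟩ := eventually_atTop.1 hev
      exact h k N fun n hn => le_of_lt (hN n hn)
  rw [key]
  exact IsGδ.iInter fun p =>
    (isClosed_biInter fun n _ =>
      isClosed_le continuous_const ((F n).continuous.abs)).isOpen_compl.isGδ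


variable [T4Space X]

lemma psi_injective : Function.Injective (psi (X := X)) := by
  intro x y h
  by_contra hxy
  obtain ⟨f, hf0, hf1, -⟩ := exists_continuous_zero_one_of_isClosed
    (isClosed_singleton (x := x)) (isClosed_singleton (x := y))
    (Set.disjoint_singleton.2 hxy)
  set g : ↥(baireOne X) := ⟨f, continuous_mem f⟩
  have hx : g ∈ (psi x).1 := (mem_psi_iff x g).2 (hf0 rfl)
  have hy : g ∉ (psi y).1 := by
    rw [mem_psi_iff]
    have := hf1 (Set.mem_singleton y)
    simp only [Pi.one_apply] at this
    simp [g, this]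
  rw [h] at hx
  exact hy hx

lemma psi_dense : Dense (Set.range (psi (X := X))) := by
  rw [dense_iff_inter_open]
  intro U hU ⟨M₀, hM₀⟩
  have hb := TopologicalSpace.isTopologicalBasis_of_subbasis
    (t := (inferInstance : TopologicalSpace (StructSpace ↥(baireOne X))))
    (s := {U : Set (StructSpace ↥(baireOne X)) | ∃ f : ↥(baireOne X), U = {M | f ∉ M.1}}) rfl
  obtain ⟨B, hB, hM₀B, hBU⟩ := hb.exists_subset_of_mem_open hM₀ hU
  obtain ⟨T, ⟨hTfin, hTsub⟩, rfl⟩ := hB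
  have hFc : ∀ t ∈ T, ∃ f : ↥(baireOne X), t = {M | f ∉ M.1} := fun t ht => hTsub ht
  choose F hF using hFc
  haveI : Fintype T := hTfin.fintype
  classical
  set g : ↥(baireOne X) := ∏ t ∈ (Finset.univ : Finset T), F t.1 t.2 with hg
  have hprime : (M₀.1).IsPrime := M₀.2.isPrime
  have hgM : g ∉ M₀.1 := by
    intro hgm
    obtain ⟨t, -, htm⟩ := (Ideal.IsPrime.prod_mem_iff (hp := hprime)).1 hgm
    have : M₀ ∈ t.1 := Set.mem_sInter.1 hM₀B t.1 t.2
    rw [hF t.1 t.2] at this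
    exact this htm
  have hgne : ∃ x : X, (g : X → ℝ) x ≠ 0 := by
    by_contra h
    push_neg at h
    have : g = 0 := Subtype.ext (funext h)
    exact hgM (this ▸ M₀.1.zero_mem)
  obtain ⟨x, hx⟩ := hgne
  have hxval : ∀ t : T, ((F t.1 t.2 : ↥(baireOne X)) : X → ℝ) x ≠ 0 := by
    have : (g : X → ℝ) x = ∏ t ∈ (Finset.univ : Finset T),
        ((F t.1 t.2 : ↥(baireOne X)) : X → ℝ) x := by
      have := map_prod (evalHom x) (fun t : T => F t.1 t.2) (Finset.univ : Finset T)
      simpa [evalHom, hg] using this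
    rw [this] at hx
    intro t
    exact Finset.prod_ne_zero_iff.1 hx t (Finset.mem_univ t)
  refine ⟨psi x, hBU ?_, Set.mem_range_self x⟩
  refine Set.mem_sInter.2 fun t ht => ?_
  rw [hF t ht]
  intro hc
  exact hxval ⟨t, ht⟩ ((mem_psi_iff x _).1 hc)

lemma phi_exists : ∃ φ : Set.range (psi (X := X)) → X,
    Continuous φ ∧ ∀ x : X, φ ⟨psi x, Set.mem_range_self x⟩ = x := by
  classical
  refine ⟨fun M => M.2.choose, ?_, ?_⟩
  · rw [continuous_def]
    intro U hU
    have key : ∀ x, x ∈ U → ∃ g : ↥(baireOne X),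
        (g : X → ℝ) x ≠ 0 ∧ ∀ y, y ∉ U → (g : X → ℝ) y = 0 := by
      intro x hx
      obtain ⟨f, hf0, hf1, -⟩ := exists_continuous_zero_one_of_isClosed
        hU.isClosed_compl (isClosed_singleton (x := x))
        (by simpa [Set.disjoint_singleton_right] using hx)
      refine ⟨⟨f, continuous_mem f⟩, ?_, fun y hy => hf0 hy⟩
      have := hf1 (Set.mem_singleton x)
      simp only [Pi.one_apply] at this
      simp [this]
    choose g hg1 hg0 using key
    set V : Set (StructSpace ↥(baireOne X)) :=
      ⋃ (x : X) (hx : x ∈ U), {M | g x hx ∉ M.1} with hV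
    have hVopen : IsOpen V :=
      isOpen_iUnion fun x => isOpen_iUnion fun hx =>
        TopologicalSpace.isOpen_generateFrom_of_mem ⟨g x hx, rfl⟩
    have heq : (fun M : Set.range (psi (X := X)) => M.2.choose) ⁻¹' U
        = Subtype.val ⁻¹' V := by
      ext M
      obtain ⟨Mv, hMv⟩ := M
      have hspec : psi hMv.choose = Mv := hMv.choose_spec
      have hfst : (psi hMv.choose).1 = Mv.1 := congrArg Subtype.val hspec
      simp only [Set.mem_preimage, hV, Set.mem_iUnion]
      constructor
      · intro h
        refine ⟨hMv.choose, h, ?_⟩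
        have h1 : g hMv.choose h ∉ (psi hMv.choose).1 := by
          simpa [mem_psi_iff] using hg1 _ h
        exact fun hc => h1 (hfst.symm ▸ hc)
      · rintro ⟨x, hx, hm⟩
        by_contra hc
        have hz : ((g x hx : ↥(baireOne X)) : X → ℝ) hMv.choose = 0 := hg0 x hx _ hc
        exact hm (hfst ▸ (mem_psi_iff _ _).2 hz)
    rw [heq]
    exact hVopen.preimage continuous_subtype_val
  · intro x
    exact psi_injective (Set.mem_range_self (f := psi) x).choose_spec

end BaireAux

/-- A `T₄` space `X` is densely weak `F_σ`-embedded in the structure space of `B₁(X)`: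
the map `ψ : x ↦ M_x = {f : f(x) = 0}` is injective, pulls back each basic closed set
`M̂_f` to the `G_δ` set `Z(f)`, its inverse `ψ⁻¹ : ψ(X) → X` is continuous, and `ψ(X)`
is dense in the structure space. -/
theorem densely_weak_fsigma_embedded (X : Type*) [TopologicalSpace X] [T4Space X] :
    ∃ ψ : X → StructSpace ↥(baireOne X),
      (∀ x : X, ((ψ x).1 : Set ↥(baireOne X)) = {f : ↥(baireOne X) | (f : X → ℝ) x = 0}) ∧
      Function.Injective ψ ∧
      (∀ f : ↥(baireOne X),
        ψ ⁻¹' {M : StructSpace ↥(baireOne X) | f ∈ M.1} = {x : X | (f : X → ℝ) x = 0} ∧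
        IsGδ {x : X | (f : X → ℝ) x = 0}) ∧
      (∃ φ : Set.range ψ → X, Continuous φ ∧ ∀ x : X, φ ⟨ψ x, Set.mem_range_self x⟩ = x) ∧
      Dense (Set.range ψ) := by
  refine ⟨BaireAux.psi, BaireAux.psi_coe, BaireAux.psi_injective, ?_, BaireAux.phi_exists,
    BaireAux.psi_dense⟩
  intro f
  refine ⟨?_, BaireAux.isGdelta_zero f⟩
  ext x
  simpa using BaireAux.mem_psi_iff x f
end

section
/- Let X be a T_4 space (normal and Hausdorff). If every closed subset of M(B_1(X)) can be written as a countable intersection of basic closed sets M̂_f (f ∈ B_1(X)), then the map ψ : X → M(B_1(X)), ψ(x) = M_x, is F_σ-continuous, i.e., the preimage under ψ of every closed subset of M(B_1(X)) is a G_δ subset of X; hence X is densely F_σ-embedded in M(B_1(X)). -/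
open Filter Topology

namespace BaireOneAux

variable {X : Type*} [TopologicalSpace X]

theorem mem_baireOne_of_continuous {f : X → ℝ} (hf : Continuous f) : f ∈ baireOne X :=
  ⟨fun _ => ⟨f, hf⟩, fun _ => tendsto_const_nhds⟩

noncomputable def evalHom (x : X) : ↥(baireOne X) →+* ℝ :=
  (Pi.evalRingHom (fun _ => ℝ) x).comp (Subring.subtype _)

theorem evalHom_apply (x : X) (f : ↥(baireOne X)) : evalHom x f = (f : X → ℝ) x := rfl

theorem evalHom_surjective (x : X) : Function.Surjective (evalHom x) :=
  fun r => ⟨⟨fun _ => r, mem_baireOne_of_continuous continuous_const⟩, rfl⟩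

noncomputable def psi (x : X) : StructSpace ↥(baireOne X) :=
  ⟨RingHom.ker (evalHom x), RingHom.ker_isMaximal_of_surjective _ (evalHom_surjective x)⟩

theorem mem_psi_iff {x : X} {f : ↥(baireOne X)} : f ∈ (psi x).1 ↔ (f : X → ℝ) x = 0 :=
  RingHom.mem_ker

theorem isGδ_zeroSet (f : ↥(baireOne X)) : IsGδ {x : X | (f : X → ℝ) x = 0} := by
  obtain ⟨F, hF⟩ := f.2
  have key : {x : X | (f : X → ℝ) x = 0}
      = ⋂ k : ℕ, ⋂ N : ℕ, (⋂ n, ⋂ (_ : N ≤ n), {x : X | 1/((k:ℝ)+1) ≤ |F n x|})ᶜ := by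
    ext x
    simp only [Set.mem_iInter, Set.mem_compl_iff, Set.mem_setOf_eq, not_forall, not_le]
    constructor
    · intro h k N
      have habs : Tendsto (fun n => |F n x|) atTop (𝓝 |(f : X → ℝ) x|) := (hF x).abs
      rw [h, abs_zero] at habs
      have h2 : ∀ᶠ n in atTop, |F n x| < 1/((k:ℝ)+1) :=
        habs.eventually_lt_const (by positivity)
      obtain ⟨n, hn, hnN⟩ := (h2.and (eventually_ge_atTop N)).exists
      exact ⟨n, hnN, hn⟩
    · intro h
      have habs : Tendsto (fun n => |F n x|) atTop (𝓝 |(f : X → ℝ) x|) := (hF x).abs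
      have hle : ∀ k : ℕ, |(f : X → ℝ) x| ≤ 1/((k:ℝ)+1) := by
        intro k
        by_contra hlt
        push_neg at hlt
        obtain ⟨N, hN⟩ := eventually_atTop.1 (habs.eventually_const_lt hlt)
        obtain ⟨n, hnN, hn⟩ := h k N
        exact absurd (hN n hnN) (not_lt.2 hn.le)
      have h0 : |(f : X → ℝ) x| ≤ 0 :=
        ge_of_tendsto tendsto_one_div_add_atTop_nhds_zero_nat (Eventually.of_forall hle)
      exact abs_eq_zero.1 (le_antisymm h0 (abs_nonneg _))
  rw [key]
  refine .iInter fun k => .iInter fun N => IsOpen.isGδ ?_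
  exact (isClosed_iInter fun n => isClosed_iInter fun _ =>
    isClosed_le continuous_const ((F n).continuous.abs)).isOpen_compl

end BaireOneAux

open BaireOneAux in
/-- If `X` is `T₄` and every closed subset of the structure space of `B₁(X)` is a
countable intersection of basic closed sets `M̂_f`, then `ψ : x ↦ M_x` is
`F_σ`-continuous (preimages of closed sets are `G_δ`), so `X` is densely
`F_σ`-embedded in the structure space. -/
theorem densely_fsigma_embedded_of_closed_countable_inter
    (X : Type*) [TopologicalSpace X] [T4Space X]
    (hcl : ∀ C : Set (StructSpace ↥(baireOne X)), IsClosed C →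
      ∃ S : ℕ → ↥(baireOne X), C = ⋂ n : ℕ, {M : StructSpace ↥(baireOne X) | S n ∈ M.1}) :
    ∃ ψ : X → StructSpace ↥(baireOne X),
      (∀ x : X, ((ψ x).1 : Set ↥(baireOne X)) = {f : ↥(baireOne X) | (f : X → ℝ) x = 0}) ∧
      Function.Injective ψ ∧
      (∀ C : Set (StructSpace ↥(baireOne X)), IsClosed C → IsGδ (ψ ⁻¹' C)) ∧
      (∃ φ : Set.range ψ → X, Continuous φ ∧ ∀ x : X, φ ⟨ψ x, Set.mem_range_self x⟩ = x) ∧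
      Dense (Set.range ψ) := by
  classical
  refine ⟨psi, ?_, ?_, ?_, ?_, ?_⟩
  · intro x
    ext f
    exact mem_psi_iff
  · -- injectivity
    intro x y hxy
    by_contra hne
    obtain ⟨f, hf0, hf1, -⟩ := exists_continuous_zero_one_of_isClosed
      (isClosed_singleton (x := x)) (isClosed_singleton (x := y))
      (Set.disjoint_singleton.2 hne)
    set g : ↥(baireOne X) := ⟨f, mem_baireOne_of_continuous f.continuous⟩ with hg
    have hgx : g ∈ (psi x).1 := mem_psi_iff.2 (hf0 rfl)
    rw [hxy] at hgx
    have : (1 : ℝ) = 0 := by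
      have := mem_psi_iff.1 hgx
      rwa [show ((g : X → ℝ) y) = 1 from hf1 rfl] at this
    norm_num at this
  · -- Gδ
    intro C hC
    obtain ⟨S, rfl⟩ := hcl C hC
    rw [Set.preimage_iInter]
    refine .iInter fun n => ?_
    have : psi ⁻¹' {M : StructSpace ↥(baireOne X) | S n ∈ M.1}
        = {x : X | ((S n : X → ℝ)) x = 0} := by
      ext x; exact mem_psi_iff
    rw [this]
    exact isGδ_zeroSet _
  · -- retraction
    have hinj : Function.Injective (psi (X := X)) := by
      intro x y hxy
      by_contra hne
      obtain ⟨f, hf0, hf1, -⟩ := exists_continuous_zero_one_of_isClosed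
        (isClosed_singleton (x := x)) (isClosed_singleton (x := y))
        (Set.disjoint_singleton.2 hne)
      set g : ↥(baireOne X) := ⟨f, mem_baireOne_of_continuous f.continuous⟩ with hg
      have hgx : g ∈ (psi x).1 := mem_psi_iff.2 (hf0 rfl)
      rw [hxy] at hgx
      have h1 : (1 : ℝ) = 0 := by
        have := mem_psi_iff.1 hgx
        rwa [show ((g : X → ℝ) y) = 1 from hf1 rfl] at this
      norm_num at h1
    refine ⟨fun p => Classical.choose p.2, ?_, ?_⟩
    · rw [continuous_def]
      intro V hV
      rw [isOpen_induced_iff]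
      -- choose Urysohn functions
      have hsep : ∀ x ∈ V, ∃ g : ↥(baireOne X),
          (g : X → ℝ) x ≠ 0 ∧ ∀ y, (g : X → ℝ) y ≠ 0 → y ∈ V := by
        intro x hx
        obtain ⟨f, hf0, hf1, -⟩ := exists_continuous_zero_one_of_isClosed
          hV.isClosed_compl (isClosed_singleton (x := x))
          (Set.disjoint_compl_left_iff_subset.2 (Set.singleton_subset_iff.2 hx))
        refine ⟨⟨f, mem_baireOne_of_continuous f.continuous⟩, ?_, ?_⟩
        · simpa [hf1 rfl] using one_ne_zero
        · intro y hy
          by_contra hyV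
          exact hy (hf0 hyV)
      choose g hgx hgV using hsep
      refine ⟨⋃ x, ⋃ hx : x ∈ V, {M : StructSpace ↥(baireOne X) | g x hx ∉ M.1}, ?_, ?_⟩
      · exact isOpen_iUnion fun x => isOpen_iUnion fun hx =>
          TopologicalSpace.isOpen_generateFrom_of_mem ⟨g x hx, rfl⟩
      · ext p
        obtain ⟨M, hM⟩ := p
        have hspec : psi (Classical.choose hM) = M := Classical.choose_spec hM
        simp only [Set.mem_preimage, Set.mem_iUnion, Set.mem_setOf_eq]
        constructor
        · rintro ⟨x, hx, hgM⟩
          rw [← hspec] at hgM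
          have : (g x hx : X → ℝ) (Classical.choose hM) ≠ 0 := fun h => hgM (mem_psi_iff.2 h)
          exact hgV x hx _ this
        · intro hV'
          refine ⟨Classical.choose hM, hV', ?_⟩
          have hEq : (psi (Classical.choose hM)).1 = M.1 := congrArg Subtype.val hspec
          rw [← hEq]
          intro hmem
          exact hgx _ hV' (mem_psi_iff.1 hmem)
    · intro x
      exact hinj (Classical.choose_spec (Set.mem_range_self (f := psi) x))
  · -- density
    set Sb : Set (Set (StructSpace ↥(baireOne X))) :=
      {U | ∃ f : ↥(baireOne X), U = {M | f ∉ M.1}} with hSb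
    have hbasis := TopologicalSpace.isTopologicalBasis_of_subbasis
      (t := (inferInstance : TopologicalSpace (StructSpace ↥(baireOne X)))) (s := Sb) rfl
    rw [hbasis.dense_iff]
    rintro o ⟨t, ⟨htf, hts⟩, rfl⟩ ⟨M, hM⟩
    choose c hc using fun (u : Set (StructSpace ↥(baireOne X))) (hu : u ∈ t) => hts hu
    have hMmem : ∀ u (hu : u ∈ t), c u hu ∉ M.1 := by
      intro u hu
      have h' : M ∈ u := Set.mem_sInter.1 hM u hu
      rw [hc u hu] at h'
      exact h'
    haveI : (M.1).IsPrime := M.2.isPrime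
    set s := htf.toFinset.attach with hs
    set g : ↥(baireOne X) := ∏ u ∈ s, c u.1 (htf.mem_toFinset.1 u.2) with hgdef
    have hgM : g ∉ M.1 := by
      intro hmem
      obtain ⟨i, hi, hci⟩ := Ideal.IsPrime.prod_mem_iff.1 hmem
      exact hMmem _ _ hci
    have hx : ∃ x, (g : X → ℝ) x ≠ 0 := by
      by_contra h
      push_neg at h
      apply hgM
      have hg0 : g = 0 := Subtype.ext (funext fun x => h x)
      rw [hg0]
      exact M.1.zero_mem
    obtain ⟨x, hgx0⟩ := hx
    refine ⟨psi x, Set.mem_sInter.2 fun u hu => ?_, Set.mem_range_self x⟩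
    rw [hc u hu]
    intro hmem
    apply hgx0
    have hmap : evalHom x g = ∏ u ∈ s, evalHom x (c u.1 (htf.mem_toFinset.1 u.2)) :=
      map_prod _ _ _
    rw [show ((g : X → ℝ) x) = evalHom x g from rfl, hmap]
    exact Finset.prod_eq_zero (Finset.mem_attach _ ⟨u, htf.mem_toFinset.2 hu⟩)
      (mem_psi_iff.1 hmem)
end

section
/- Let X be a normal topological space, Y any topological space, ψ : X → Y an F_σ-continuous function, and h : Y → ℝ a continuous function. Then h ∘ ψ ∈ B_1(X). -/
open Filter Topology

/-- An `F_σ` subset of a topological space: a countable union of closed sets. -/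
def IsFsigma {α : Type*} [TopologicalSpace α] (s : Set α) : Prop :=
  ∃ T : Set (Set α), T.Countable ∧ (∀ t ∈ T, IsClosed t) ∧ s = ⋃₀ T

/-- A function is `F_σ`-continuous if the preimage of every open set is an `F_σ` set. -/
def FSigmaContinuous {α β : Type*} [TopologicalSpace α] [TopologicalSpace β]
    (f : α → β) : Prop :=
  ∀ U : Set β, IsOpen U → IsFsigma (f ⁻¹' U)


open Set in
/-- From an `F_σ` set, extract an `ℕ`-indexed family of closed sets covering it. -/
lemma IsFsigma.exists_seq {α : Type*} [TopologicalSpace α] {s : Set α} (hs : IsFsigma s) :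
    ∃ E : ℕ → Set α, (∀ m, IsClosed (E m)) ∧ (∀ m, E m ⊆ s) ∧ ∀ x ∈ s, ∃ m, x ∈ E m := by
  obtain ⟨T, hTc, hTcl, rfl⟩ := hs
  rcases T.eq_empty_or_nonempty with rfl | hne
  · exact ⟨fun _ => ∅, fun _ => isClosed_empty, fun _ => by simp, fun x hx => by simp at hx⟩
  · obtain ⟨E, rfl⟩ := hTc.exists_eq_range hne
    refine ⟨E, fun m => hTcl _ ⟨m, rfl⟩, fun m => subset_sUnion_of_mem ⟨m, rfl⟩, ?_⟩
    intro x hx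
    obtain ⟨t, ⟨m, rfl⟩, hxt⟩ := hx
    exact ⟨m, hxt⟩

/-- Finite insertion lemma: given countably many closed "constraint" sets `C j` with open
rational-interval targets `(a j, b j)` that are pointwise witnessed by `w`, for each `n` there
is a continuous function satisfying the first `n` constraints (with closed intervals). -/
lemma insertion_step {X : Type*} [TopologicalSpace X] [NormalSpace X]
    (C : ℕ → Set X) (hC : ∀ j, IsClosed (C j)) (a b : ℕ → ℝ) (w : X → ℝ)
    (hw : ∀ j x, x ∈ C j → a j < w x ∧ w x < b j) :
    ∀ n : ℕ, ∃ g : C(X, ℝ), ∀ j < n, ∀ x ∈ C j, a j ≤ g x ∧ g x ≤ b j := by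
  intro n
  induction n with
  | zero => exact ⟨0, fun j hj => by omega⟩
  | succ n ih =>
    obtain ⟨g, hg⟩ := ih
    set s : Finset ℕ := (Finset.range n).filter (fun j => ¬(a n ≤ b j ∧ a j ≤ b n)) with hs
    set D : Set X := ⋃ j ∈ s, C j with hD
    have hDclosed : IsClosed D := isClosed_biUnion_finset fun j _ => hC j
    have hdisj : Disjoint D (C n) := by
      rw [Set.disjoint_left]
      rintro x hx hxn
      rw [hD, Set.mem_iUnion₂] at hx
      obtain ⟨j, hj, hxj⟩ := hx
      rw [hs, Finset.mem_filter] at hj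
      have h1 := hw j x hxj
      have h2 := hw n x hxn
      exact hj.2 ⟨by linarith, by linarith⟩
    obtain ⟨u, hu0, hu1, hu01⟩ := exists_continuous_zero_one_of_isClosed hDclosed (hC n) hdisj
    refine ⟨⟨fun x => u x * (max (a n) (min (b n) (g x))) + (1 - u x) * g x, by fun_prop⟩, ?_⟩
    intro j hj x hx
    have hval : (⟨fun x => u x * (max (a n) (min (b n) (g x))) + (1 - u x) * g x, by fun_prop⟩ :
        C(X, ℝ)) x = u x * (max (a n) (min (b n) (g x))) + (1 - u x) * g x := rfl
    rw [hval]
    rcases Nat.lt_succ_iff_lt_or_eq.mp hj with hj' | rfl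
    · have hgx := hg j hj' x hx
      by_cases hov : a n ≤ b j ∧ a j ≤ b n
      · have hcl1 : a j ≤ max (a n) (min (b n) (g x)) :=
          le_max_of_le_right (le_min hov.2 hgx.1)
        have hcl2 : max (a n) (min (b n) (g x)) ≤ b j :=
          max_le hov.1 (le_trans (min_le_right _ _) hgx.2)
        have hu := hu01 x
        have hu' : 0 ≤ u x ∧ u x ≤ 1 := ⟨hu.1, hu.2⟩
        constructor
        · nlinarith [hu'.1, hu'.2, hgx.1, hcl1]
        · nlinarith [hu'.1, hu'.2, hgx.2, hcl2]
      · have hxD : x ∈ D := by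
          rw [hD, Set.mem_iUnion₂]
          exact ⟨j, by rw [hs, Finset.mem_filter]; exact ⟨Finset.mem_range.mpr hj', hov⟩, hx⟩
        have hux : u x = 0 := hu0 hxD
        rw [hux]
        simpa using hgx
    · have hux : u x = 1 := hu1 hx
      have hwn := hw j x hx
      have hab : a j ≤ b j := by linarith [hwn.1, hwn.2]
      rw [hux]
      have heq : (1:ℝ) * max (a j) (min (b j) (g x)) + (1-1) * g x
          = max (a j) (min (b j) (g x)) := by ring
      rw [heq]
      exact ⟨le_max_left _ _, max_le hab (min_le_left _ _)⟩

/-- If `X` is normal, `ψ : X → Y` is `F_σ`-continuous and `h : Y → ℝ` is continuous,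
then `h ∘ ψ` is a Baire one function on `X`. -/
theorem continuous_comp_fsigmaContinuous_mem_baireOne
    {X Y : Type*} [TopologicalSpace X] [TopologicalSpace Y] [NormalSpace X]
    (ψ : X → Y) (hψ : FSigmaContinuous ψ) (h : Y → ℝ) (hh : Continuous h) :
    h ∘ ψ ∈ baireOne X := by
  classical
  set f : X → ℝ := h ∘ ψ with hf
  have hfs : ∀ pq : ℚ × ℚ, ∃ E : ℕ → Set X, (∀ m, IsClosed (E m)) ∧
      (∀ m, E m ⊆ f ⁻¹' Set.Ioo (pq.1:ℝ) (pq.2:ℝ)) ∧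
      ∀ x ∈ f ⁻¹' Set.Ioo (pq.1:ℝ) (pq.2:ℝ), ∃ m, x ∈ E m := by
    intro pq
    refine IsFsigma.exists_seq ?_
    have : f ⁻¹' Set.Ioo (pq.1:ℝ) (pq.2:ℝ) = ψ ⁻¹' (h ⁻¹' Set.Ioo (pq.1:ℝ) (pq.2:ℝ)) := rfl
    rw [this]
    exact hψ _ (isOpen_Ioo.preimage hh)
  choose E hEcl hEsub hEcov using hfs
  let e : ℕ ≃ ((ℚ × ℚ) × ℕ) := (Denumerable.eqv ((ℚ × ℚ) × ℕ)).symm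
  set C : ℕ → Set X := fun n => E (e n).1 (e n).2 with hCdef
  set a : ℕ → ℝ := fun n => ((e n).1.1 : ℝ) with hadef
  set b : ℕ → ℝ := fun n => ((e n).1.2 : ℝ) with hbdef
  have hC : ∀ j, IsClosed (C j) := fun j => hEcl _ _
  have hw : ∀ j x, x ∈ C j → a j < f x ∧ f x < b j := by
    intro j x hx
    have := hEsub (e j).1 (e j).2 hx
    exact ⟨this.1, this.2⟩
  obtain ⟨g, hg⟩ : ∃ g : ℕ → C(X, ℝ),
      ∀ n, ∀ j < n, ∀ x ∈ C j, a j ≤ g n x ∧ g n x ≤ b j := by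
    choose g hg using insertion_step C hC a b f hw
    exact ⟨g, hg⟩
  refine ⟨g, fun x => ?_⟩
  rw [Metric.tendsto_atTop]
  intro ε hε
  obtain ⟨p, hp1, hp2⟩ := exists_rat_btwn (show f x - ε/2 < f x by linarith)
  obtain ⟨q, hq1, hq2⟩ := exists_rat_btwn (show f x < f x + ε/2 by linarith)
  have hxpre : x ∈ f ⁻¹' Set.Ioo ((p:ℝ)) ((q:ℝ)) := ⟨hp2, hq1⟩
  obtain ⟨m, hm⟩ := hEcov (p, q) x hxpre
  set j : ℕ := e.symm ((p, q), m) with hjdef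
  have hxj : x ∈ C j := by
    have : C j = E (p, q) m := by
      rw [hCdef]
      simp [hjdef]
    rw [this]; exact hm
  have haj : a j = (p:ℝ) := by rw [hadef]; simp [hjdef]
  have hbj : b j = (q:ℝ) := by rw [hbdef]; simp [hjdef]
  refine ⟨j + 1, fun n hn => ?_⟩
  have hb := hg n j (by omega) x hxj
  rw [haj, hbj] at hb
  rw [Real.dist_eq, abs_sub_lt_iff]
  constructor <;> linarith [hb.1, hb.2]
end

section
/- Let X be a T_4 space (normal and Hausdorff), Y a compact Hausdorff space, and f : X → Y an F_σ-continuous function. Then there exists a unique continuous function f̂ : M(B_1(X)) → Y such that f̂ ∘ ψ = f, where ψ : X → M(B_1(X)) is the map ψ(x) = M_x. -/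
open Filter Topology

namespace B1Ext

variable {X : Type*} [TopologicalSpace X]

/-- The zero set of a Baire one function. -/
def ZS (g : ↥(baireOne X)) : Set X := {x | (g : X → ℝ) x = 0}

lemma isFsigma_seq {α : Type*} [TopologicalSpace α] {s : Set α} (h : IsFsigma s) :
    ∃ C : ℕ → Set α, (∀ n, IsClosed (C n)) ∧ s = ⋃ n, C n := by
  obtain ⟨T, hTc, hTcl, rfl⟩ := h
  rcases T.eq_empty_or_nonempty with rfl | hne
  · exact ⟨fun _ => ∅, fun _ => isClosed_empty, by simp⟩
  · obtain ⟨e, rfl⟩ := hTc.exists_eq_range hne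
    exact ⟨e, fun n => hTcl _ ⟨n, rfl⟩, (Set.sUnion_range e)⟩

lemma exists_mul_eq_one {g : ↥(baireOne X)} (hg : ∀ x, (g : X → ℝ) x ≠ 0) :
    ∃ v : ↥(baireOne X), g * v = 1 := by
  obtain ⟨F, hF⟩ := g.2
  have hmem : (fun x => ((g : X → ℝ) x)⁻¹) ∈ baireOne X := by
    refine ⟨fun n => ⟨fun x => F n x / max ((F n x) ^ 2) (1 / (n + 1)), ?_⟩, ?_⟩
    · exact (F n).continuous.div (((F n).continuous.pow 2).max continuous_const)
        (fun x => ne_of_gt (lt_max_of_lt_right (by positivity)))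
    · intro x
      have h1 : Tendsto (fun n : ℕ => max ((F n x) ^ 2) (1 / (n + 1 : ℝ)))
          atTop (𝓝 (((g : X → ℝ) x) ^ 2)) := by
        have := ((hF x).pow 2).max tendsto_one_div_add_atTop_nhds_zero_nat
        simpa [max_eq_left (sq_nonneg ((g : X → ℝ) x))] using this
      have h2 := (hF x).div h1 (pow_ne_zero 2 (hg x))
      have h3 : (g : X → ℝ) x / ((g : X → ℝ) x) ^ 2 = ((g : X → ℝ) x)⁻¹ := by
        rw [sq]
        exact div_self_mul_self' _
      rw [h3] at h2; exact h2
  refine ⟨⟨_, hmem⟩, ?_⟩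
  apply Subtype.ext
  funext x
  exact mul_inv_cancel₀ (hg x)

lemma zs_nonempty {M : Ideal ↥(baireOne X)} (hM : M ≠ ⊤) {k : ↥(baireOne X)}
    (hk : k ∈ M) : (ZS k).Nonempty := by
  by_contra hemp
  rw [Set.not_nonempty_iff_eq_empty] at hemp
  have hg : ∀ x, (k : X → ℝ) x ≠ 0 := fun x hx =>
    (Set.eq_empty_iff_forall_notMem.1 hemp x) hx
  obtain ⟨v, hv⟩ := exists_mul_eq_one hg
  exact hM (Ideal.eq_top_iff_one _ |>.2 (hv ▸ Ideal.mul_mem_right v M hk))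

lemma mem_of_zs_meets {M : Ideal ↥(baireOne X)} (hM : M.IsMaximal) {g : ↥(baireOne X)}
    (h : ∀ k ∈ M, (ZS k ∩ ZS g).Nonempty) : g ∈ M := by
  by_contra hg
  obtain ⟨r, c, hc, hrc⟩ := hM.exists_inv hg
  obtain ⟨x, hx1, hx2⟩ := h c hc
  have hx1' : (c : X → ℝ) x = 0 := hx1
  have hx2' : (g : X → ℝ) x = 0 := hx2
  have := congrArg (fun u : ↥(baireOne X) => (u : X → ℝ) x) hrc
  have hexp : ((r * g + c : ↥(baireOne X)) : X → ℝ) x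
      = (r : X → ℝ) x * (g : X → ℝ) x + (c : X → ℝ) x := rfl
  rw [hexp, hx1', hx2', mul_zero, add_zero] at this
  have hone : ((1 : ↥(baireOne X)) : X → ℝ) x = 1 := rfl
  rw [hone] at this
  exact zero_ne_one this

end B1Ext
namespace B1Ext

variable {X : Type*} [TopologicalSpace X]

/-- Key separation lemma: if `h` is an `F_σ`-continuous real function on a normal space,
then for any level `a` there is a nonnegative Baire-one function vanishing exactly on
`{h ≤ a}`. -/
lemma posSep [NormalSpace X] {h : X → ℝ}
    (hh : ∀ U : Set ℝ, IsOpen U → IsFsigma (h ⁻¹' U)) (a : ℝ) :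
    ∃ G : ↥(baireOne X), (∀ x, h x ≤ a → (G : X → ℝ) x = 0) ∧
      (∀ x, a < h x → 0 < (G : X → ℝ) x) := by
  classical
  set t : ℕ → ℝ := fun k => a + 1 / (k + 1) with ht
  have hta : ∀ k, a < t k := fun k => lt_add_of_pos_right _ (by positivity)
  have hA : ∀ k : ℕ, ∃ C : ℕ → Set X, (∀ n, IsClosed (C n)) ∧
      h ⁻¹' (Set.Iio (t k)) = ⋃ n, C n := fun k => isFsigma_seq (hh _ isOpen_Iio)
  choose CA hCAcl hCAU using hA
  have hB : ∀ k : ℕ, ∃ C : ℕ → Set X, (∀ n, IsClosed (C n)) ∧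
      h ⁻¹' (Set.Ioi (t k)) = ⋃ n, C n := fun k => isFsigma_seq (hh _ isOpen_Ioi)
  choose CB hCBcl hCBU using hB
  have hdisj : ∀ k n m, Disjoint (CA k n) (CB k m) := by
    intro k n m
    refine Set.disjoint_left.2 fun x hx1 hx2 => ?_
    have h1 : x ∈ h ⁻¹' (Set.Iio (t k)) := by
      rw [hCAU]; exact Set.mem_iUnion.2 ⟨n, hx1⟩
    have h2 : x ∈ h ⁻¹' (Set.Ioi (t k)) := by
      rw [hCBU]; exact Set.mem_iUnion.2 ⟨m, hx2⟩
    simp only [Set.mem_preimage, Set.mem_Iio] at h1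
    simp only [Set.mem_preimage, Set.mem_Ioi] at h2
    linarith
  have hUry : ∀ k m n, ∃ e : C(X, ℝ), Set.EqOn e 0 (CA k n) ∧ Set.EqOn e 1 (CB k m) ∧
      ∀ x, e x ∈ Set.Icc (0 : ℝ) 1 :=
    fun k m n => exists_continuous_zero_one_of_isClosed (hCAcl k n) (hCBcl k m) (hdisj k n m)
  choose e he0'' he1'' he01 using hUry
  have he0 : ∀ k m n x, x ∈ CA k n → e k m n x = 0 :=
    fun k m n x hx => by simpa using he0'' k m n hx
  have he1 : ∀ k m n x, x ∈ CB k m → e k m n x = 1 :=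
    fun k m n x hx => by simpa using he1'' k m n hx
  -- partial minima
  set v : ℕ → ℕ → ℕ → C(X, ℝ) :=
    fun k m n => Nat.rec (e k m 0) (fun j ih => ih ⊓ e k m (j + 1)) n with hv
  have hv_succ : ∀ k m n x, v k m (n + 1) x = min (v k m n x) (e k m (n + 1) x) :=
    fun k m n x => rfl
  have hv01 : ∀ k m n x, v k m n x ∈ Set.Icc (0 : ℝ) 1 := by
    intro k m n x
    induction n with
    | zero => exact he01 k m 0 x
    | succ j ih =>
      rw [hv_succ]
      exact ⟨le_min ih.1 (he01 k m (j + 1) x).1, min_le_of_left_le ih.2⟩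
  have hv_anti : ∀ k m x, Antitone fun n => v k m n x := by
    intro k m x
    apply antitone_nat_of_succ_le
    intro n
    rw [hv_succ]
    exact min_le_left _ _
  have hv_le_e : ∀ k m n x, v k m n x ≤ e k m n x := by
    intro k m n x
    cases n with
    | zero => exact le_refl _
    | succ j => rw [hv_succ]; exact min_le_right _ _
  have hv_one : ∀ k m n x, x ∈ CB k m → v k m n x = 1 := by
    intro k m n x hx
    induction n with
    | zero => exact he1 k m 0 x hx
    | succ j ih => rw [hv_succ, ih, he1 k m (j + 1) x hx, min_self]
  -- the pointwise infimum
  set φ : ℕ → ℕ → X → ℝ := fun k m x => ⨅ n, v k m n x with hφ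
  have hbdd : ∀ k m x, BddBelow (Set.range fun n => v k m n x) :=
    fun k m x => ⟨0, fun y ⟨n, hn⟩ => hn ▸ (hv01 k m n x).1⟩
  have hφ0 : ∀ k m x, 0 ≤ φ k m x := fun k m x => le_ciInf fun n => (hv01 k m n x).1
  have hφ_le : ∀ k m n x, φ k m x ≤ v k m n x := fun k m n x => ciInf_le (hbdd k m x) n
  have hφ1 : ∀ k m x, φ k m x ≤ 1 := fun k m x => (hφ_le k m 0 x).trans (hv01 k m 0 x).2
  have hφ_tendsto : ∀ k m x, Tendsto (fun n => v k m n x) atTop (𝓝 (φ k m x)) :=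
    fun k m x => tendsto_atTop_ciInf (hv_anti k m x) (hbdd k m x)
  have hφA : ∀ k m x, h x < t k → φ k m x = 0 := by
    intro k m x hx
    have : x ∈ ⋃ n, CA k n := by rw [← hCAU]; exact hx
    obtain ⟨j, hj⟩ := Set.mem_iUnion.1 this
    have h1 : φ k m x ≤ 0 := by
      have := (hφ_le k m j x).trans (hv_le_e k m j x)
      rwa [he0 k m j x hj] at this
    exact le_antisymm h1 (hφ0 k m x)
  have hφB : ∀ k m x, x ∈ CB k m → φ k m x = 1 := by
    intro k m x hx
    refine le_antisymm (hφ1 k m x) (le_ciInf fun n => ?_)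
    rw [hv_one k m n x hx]
  -- weights
  set w : ℕ × ℕ → ℝ := fun p => (1 / 2 : ℝ) ^ p.1 * (1 / 2 : ℝ) ^ p.2 with hw
  have hw_pos : ∀ p, 0 < w p := fun p => by positivity
  have hw_sum : Summable w := by
    apply Summable.mul_of_nonneg summable_geometric_two summable_geometric_two
    · intro i; positivity
    · intro i; positivity
  -- the function G
  set Gf : X → ℝ := fun x => ∑' p : ℕ × ℕ, w p * φ p.1 p.2 x with hGf
  have hsummand_nonneg : ∀ x (p : ℕ × ℕ), 0 ≤ w p * φ p.1 p.2 x :=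
    fun x p => mul_nonneg (hw_pos p).le (hφ0 p.1 p.2 x)
  have hsummand_le : ∀ x (p : ℕ × ℕ), w p * φ p.1 p.2 x ≤ w p :=
    fun x p => (mul_le_of_le_one_right (hw_pos p).le (hφ1 p.1 p.2 x))
  have hsummable : ∀ x, Summable fun p : ℕ × ℕ => w p * φ p.1 p.2 x :=
    fun x => hw_sum.of_nonneg_of_le (hsummand_nonneg x) (hsummand_le x)
  have hGmem : Gf ∈ baireOne X := by
    refine ⟨fun n => ⟨fun x => ∑' p : ℕ × ℕ, w p * v p.1 p.2 n x, ?_⟩, ?_⟩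
    · apply continuous_tsum
        (fun p => continuous_const.mul (v p.1 p.2 n).continuous) hw_sum
      intro p x
      show ‖w p * v p.1 p.2 n x‖ ≤ w p
      rw [Real.norm_eq_abs, abs_mul, abs_of_nonneg (hw_pos p).le,
        abs_of_nonneg (hv01 p.1 p.2 n x).1]
      exact mul_le_of_le_one_right (hw_pos p).le (hv01 p.1 p.2 n x).2
    · intro x
      simp only [ContinuousMap.coe_mk]
      apply tendsto_tsum_of_dominated_convergence (bound := w) hw_sum
      · exact fun p => ((hφ_tendsto p.1 p.2 x).const_mul _)
      · filter_upwards with n p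
        rw [Real.norm_eq_abs, abs_mul, abs_of_nonneg (hw_pos p).le,
          abs_of_nonneg (hv01 p.1 p.2 n x).1]
        exact mul_le_of_le_one_right (hw_pos p).le (hv01 p.1 p.2 n x).2
  refine ⟨⟨Gf, hGmem⟩, ?_, ?_⟩
  · intro x hx
    show Gf x = 0
    rw [hGf]
    have : ∀ p : ℕ × ℕ, w p * φ p.1 p.2 x = 0 := by
      intro p
      rw [hφA p.1 p.2 x (lt_of_le_of_lt hx (hta p.1)), mul_zero]
    simp only [this, tsum_zero]
  · intro x hx
    show 0 < Gf x
    obtain ⟨k, hk⟩ := exists_nat_one_div_lt (show (0 : ℝ) < h x - a by linarith)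
    have htk : t k < h x := by
      rw [ht]; simp only; linarith
    have hxB : x ∈ ⋃ m, CB k m := by rw [← hCBU]; exact htk
    obtain ⟨m, hm⟩ := Set.mem_iUnion.1 hxB
    refine Summable.tsum_pos (hsummable x) (hsummand_nonneg x) (k, m) ?_
    rw [hφB k m x hm, mul_one]
    exact hw_pos (k, m)

end B1Ext
namespace B1Ext

lemma zs_add_sq_subset {X : Type*} [TopologicalSpace X] (k₁ k₂ : ↥(baireOne X)) :
    ZS (k₁ * k₁ + k₂ * k₂) ⊆ ZS k₁ ∩ ZS k₂ := by
  intro x hx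
  have hx' : (k₁ : X → ℝ) x * (k₁ : X → ℝ) x + (k₂ : X → ℝ) x * (k₂ : X → ℝ) x = 0 := hx
  have h1 := (add_eq_zero_iff_of_nonneg (mul_self_nonneg _) (mul_self_nonneg _)).1 hx'
  exact ⟨mul_self_eq_zero.1 h1.1, mul_self_eq_zero.1 h1.2⟩

end B1Ext

/-- Every `F_σ`-continuous map from a `T₄` space `X` to a compact Hausdorff space `Y`
extends uniquely to a continuous map on the structure space of `B₁(X)` along
`ψ : x ↦ M_x`. -/
theorem unique_continuous_extension_of_fsigmaContinuous
    {X Y : Type*} [TopologicalSpace X] [T4Space X]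
    [TopologicalSpace Y] [CompactSpace Y] [T2Space Y]
    (f : X → Y) (hf : FSigmaContinuous f)
    (ψ : X → StructSpace ↥(baireOne X))
    (hψ : ∀ x : X, ((ψ x).1 : Set ↥(baireOne X)) = {g : ↥(baireOne X) | (g : X → ℝ) x = 0}) :
    ∃! F : StructSpace ↥(baireOne X) → Y, Continuous F ∧ F ∘ ψ = f := by
  classical
  have hψmem : ∀ (x : X) (g : ↥(baireOne X)), g ∈ (ψ x).1 ↔ (g : X → ℝ) x = 0 := by
    intro x g
    constructor
    · intro hg
      have h2 : g ∈ ((ψ x).1 : Set ↥(baireOne X)) := hg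
      rw [hψ x] at h2; exact h2
    · intro hg
      have h2 : g ∈ ({g : ↥(baireOne X) | (g : X → ℝ) x = 0} : Set _) := hg
      rw [← hψ x] at h2; exact h2
  have hfsig : ∀ (φc : C(Y, ℝ)) (U : Set ℝ), IsOpen U →
      IsFsigma ((fun x => φc (f x)) ⁻¹' U) :=
    fun φc U hU => hf _ (hU.preimage φc.continuous)
  -- the filter of images of zero sets
  set FM : StructSpace ↥(baireOne X) → Filter Y :=
    fun M => ⨅ k : M.1, 𝓟 (f '' B1Ext.ZS (k : ↥(baireOne X))) with hFMdef
  have hmemFM : ∀ (M : StructSpace ↥(baireOne X)) (k : ↥(baireOne X)), k ∈ M.1 →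
      f '' B1Ext.ZS k ∈ FM M := by
    intro M k hk
    exact le_principal_iff.1 (iInf_le _ (⟨k, hk⟩ : M.1))
  have hFMneBot : ∀ M, (FM M).NeBot := by
    intro M
    haveI : Nonempty M.1 := ⟨⟨0, M.1.zero_mem⟩⟩
    apply iInf_neBot_of_directed'
    · rintro ⟨k₁, hk₁⟩ ⟨k₂, hk₂⟩
      refine ⟨⟨k₁ * k₁ + k₂ * k₂,
        M.1.add_mem (Ideal.mul_mem_left _ _ hk₁) (Ideal.mul_mem_left _ _ hk₂)⟩, ?_, ?_⟩
      · exact principal_mono.2 (Set.image_mono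
          (fun x hx => (B1Ext.zs_add_sq_subset k₁ k₂ hx).1))
      · exact principal_mono.2 (Set.image_mono
          (fun x hx => (B1Ext.zs_add_sq_subset k₁ k₂ hx).2))
    · rintro ⟨k, hk⟩
      exact principal_neBot_iff.2 ((B1Ext.zs_nonempty M.2.ne_top hk).image f)
  have hexists : ∀ M, ∃ y, ClusterPt y (FM M) := by
    intro M
    haveI := hFMneBot M
    exact exists_clusterPt_of_compactSpace (FM M)
  -- the key argument
  have main : ∀ (M : StructSpace ↥(baireOne X)) (φc : C(Y, ℝ)) (y : Y),
      ClusterPt y (FM M) → φc y < 1/3 →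
      ∃ G' : ↥(baireOne X), G' ∉ M.1 ∧
        ∀ (M' : StructSpace ↥(baireOne X)) (y' : Y),
          ClusterPt y' (FM M') → G' ∉ M'.1 → φc y' ≤ 2/3 := by
    intro M φc y hcl hy
    obtain ⟨G, hG0, hGpos⟩ := B1Ext.posSep (hfsig φc) (1/3)
    obtain ⟨G', hG'0, hG'pos⟩ := B1Ext.posSep (hfsig (-φc)) (-(2/3))
    have hG'0' : ∀ x, (2/3 : ℝ) ≤ φc (f x) → (G' : X → ℝ) x = 0 := by
      intro x hx
      apply hG'0 x
      simp only [ContinuousMap.neg_apply]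
      linarith
    have hG'pos' : ∀ x, φc (f x) < 2/3 → 0 < (G' : X → ℝ) x := by
      intro x hx
      apply hG'pos x
      simp only [ContinuousMap.neg_apply]
      linarith
    have hGM : G ∈ M.1 := by
      apply B1Ext.mem_of_zs_meets M.2
      intro k hk
      have hN : φc ⁻¹' Set.Iio (1/3) ∈ 𝓝 y :=
        (isOpen_Iio.preimage φc.continuous).mem_nhds hy
      obtain ⟨z, hz1, hz2⟩ := clusterPt_iff_nonempty.1 hcl hN (hmemFM M k hk)
      obtain ⟨x, hxk, rfl⟩ := hz2
      refine ⟨x, hxk, ?_⟩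
      have hz1' : φc (f x) < 1/3 := hz1
      exact hG0 x (le_of_lt hz1')
    have hG'M : G' ∉ M.1 := by
      intro hG'M
      have hu : ∀ x, ((G * G + G' * G' : ↥(baireOne X)) : X → ℝ) x ≠ 0 := by
        intro x hx0
        have hx0' : (G : X → ℝ) x * (G : X → ℝ) x
            + (G' : X → ℝ) x * (G' : X → ℝ) x = 0 := hx0
        have h1 := (add_eq_zero_iff_of_nonneg (mul_self_nonneg _) (mul_self_nonneg _)).1 hx0'
        have hGx : (G : X → ℝ) x = 0 := mul_self_eq_zero.1 h1.1
        have hG'x : (G' : X → ℝ) x = 0 := mul_self_eq_zero.1 h1.2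
        have c1 : φc (f x) ≤ 1/3 := by
          by_contra hgt; push_neg at hgt
          exact absurd hGx (ne_of_gt (hGpos x hgt))
        have c2 : 0 < (G' : X → ℝ) x := hG'pos' x (by linarith)
        exact absurd hG'x (ne_of_gt c2)
      obtain ⟨v, hv⟩ := B1Ext.exists_mul_eq_one hu
      have h1M : (1 : ↥(baireOne X)) ∈ M.1 := hv ▸ Ideal.mul_mem_right _ _
        (M.1.add_mem (Ideal.mul_mem_left _ _ hGM) (Ideal.mul_mem_left _ _ hG'M))
      exact (Ideal.ne_top_iff_one M.1).1 M.2.ne_top h1M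
    refine ⟨G', hG'M, ?_⟩
    intro M' y' hcl' hG'M'
    obtain ⟨r, c, hc, hrc⟩ := M'.2.exists_inv hG'M'
    have hZc : ∀ x, x ∈ B1Ext.ZS c → φc (f x) < 2/3 := by
      intro x hxc
      by_contra hge; push_neg at hge
      have hG'x : (G' : X → ℝ) x = 0 := hG'0' x hge
      have hcx : (c : X → ℝ) x = 0 := hxc
      have heval := congrArg (fun u : ↥(baireOne X) => (u : X → ℝ) x) hrc
      have hexp : ((r * G' + c : ↥(baireOne X)) : X → ℝ) x
          = (r : X → ℝ) x * (G' : X → ℝ) x + (c : X → ℝ) x := rfl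
      rw [hexp, hG'x, hcx, mul_zero, add_zero] at heval
      have hone : ((1 : ↥(baireOne X)) : X → ℝ) x = 1 := rfl
      rw [hone] at heval
      exact zero_ne_one heval
    have h1 : ClusterPt y' (𝓟 (f '' B1Ext.ZS c)) :=
      hcl'.mono (le_principal_iff.2 (hmemFM M' c hc))
    have h2 : y' ∈ closure (f '' B1Ext.ZS c) := mem_closure_iff_clusterPt.2 h1
    have h3 : closure (f '' B1Ext.ZS c) ⊆ φc ⁻¹' Set.Iic (2/3) := by
      apply closure_minimal
      · rintro z ⟨x, hx, rfl⟩
        exact le_of_lt (hZc x hx)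
      · exact isClosed_Iic.preimage φc.continuous
    exact h3 h2
  -- uniqueness of cluster points
  have huniq : ∀ (M : StructSpace ↥(baireOne X)) (y₁ y₂ : Y),
      ClusterPt y₁ (FM M) → ClusterPt y₂ (FM M) → y₁ = y₂ := by
    intro M y₁ y₂ h₁ h₂
    by_contra hne
    obtain ⟨φc, hφ0, hφ1, _⟩ := exists_continuous_zero_one_of_isClosed
      (isClosed_singleton (x := y₁)) (isClosed_singleton (x := y₂))
      (Set.disjoint_singleton_left.2 (by simpa using hne))
    have hφy₁ : φc y₁ = 0 := hφ0 rfl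
    have hφy₂ : φc y₂ = 1 := hφ1 rfl
    obtain ⟨G', hG'M, hprop⟩ := main M φc y₁ h₁ (by rw [hφy₁]; norm_num)
    have := hprop M y₂ h₂ hG'M
    rw [hφy₂] at this
    norm_num at this
  -- the extension
  set Fh : StructSpace ↥(baireOne X) → Y := fun M => Classical.choose (hexists M) with hFhdef
  have hFh : ∀ M, ClusterPt (Fh M) (FM M) := fun M => Classical.choose_spec (hexists M)
  have hcomp : ∀ x, Fh (ψ x) = f x := by
    intro x
    refine huniq (ψ x) _ _ (hFh (ψ x)) ?_
    have hpure : pure (f x) ≤ FM (ψ x) := by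
      apply le_iInf
      rintro ⟨k, hk⟩
      refine le_principal_iff.2 (mem_pure.2 ⟨x, (hψmem x k).1 hk, rfl⟩)
    exact neBot_of_le (le_inf (pure_le_nhds (f x)) hpure)
  have hcont : Continuous Fh := by
    rw [continuous_def]
    intro V hV
    rw [isOpen_iff_forall_mem_open]
    intro M hM
    obtain ⟨φc, hφ0, hφ1, _⟩ := exists_continuous_zero_one_of_isClosed
      (isClosed_singleton (x := Fh M)) hV.isClosed_compl
      (Set.disjoint_singleton_left.2 (fun hFVc => hFVc hM))
    have hφFh : φc (Fh M) = 0 := hφ0 rfl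
    obtain ⟨G', hG'M, hprop⟩ := main M φc (Fh M) (hFh M) (by rw [hφFh]; norm_num)
    refine ⟨{M' : StructSpace ↥(baireOne X) | G' ∉ M'.1}, ?_,
      TopologicalSpace.isOpen_generateFrom_of_mem ⟨G', rfl⟩, hG'M⟩
    intro M' hM'
    have h23 := hprop M' (Fh M') (hFh M') hM'
    by_contra hnV
    have h1 : φc (Fh M') = 1 := hφ1 hnV
    rw [h1] at h23
    norm_num at h23
  -- density of the range of ψ
  have hdense : Dense (Set.range ψ) := by
    have hb := TopologicalSpace.isTopologicalBasis_of_subbasis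
      (t := (inferInstance : TopologicalSpace (StructSpace ↥(baireOne X))))
      (s := {U : Set (StructSpace ↥(baireOne X)) | ∃ g : ↥(baireOne X), U = {M | g ∉ M.1}})
      rfl
    rw [hb.dense_iff]
    rintro o ⟨ts, ⟨hfin, hsub⟩, rfl⟩ ⟨M₀, hM₀⟩
    have hrep : ∀ u : Set (Set (StructSpace ↥(baireOne X))), u.Finite →
        u ⊆ {U | ∃ g : ↥(baireOne X), U = {M | g ∉ M.1}} →
        ∃ g : ↥(baireOne X), ⋂₀ u = {M | g ∉ M.1} := by
      intro u hu
      refine Set.Finite.induction_on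
        (motive := fun u _ => u ⊆ {U | ∃ g : ↥(baireOne X), U = {M | g ∉ M.1}} →
          ∃ g : ↥(baireOne X), ⋂₀ u = {M | g ∉ M.1}) u hu ?_ ?_
      · intro _
        refine ⟨1, ?_⟩
        ext M
        simp only [Set.sInter_empty, Set.mem_univ, true_iff, Set.mem_setOf_eq]
        exact (Ideal.ne_top_iff_one M.1).1 M.2.ne_top
      · intro U u' _ _ ih hsub'
        obtain ⟨g₀, rfl⟩ := hsub' (Set.mem_insert _ _)
        obtain ⟨g₁, hg₁⟩ := ih (fun z hz => hsub' (Set.mem_insert_of_mem _ hz))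
        refine ⟨g₀ * g₁, ?_⟩
        ext M
        rw [Set.sInter_insert, Set.mem_inter_iff, hg₁]
        simp only [Set.mem_setOf_eq]
        rw [M.2.isPrime.mul_mem_iff_mem_or_mem]
        tauto
    obtain ⟨g, hg⟩ := hrep ts hfin hsub
    have hM₀' : M₀ ∈ ⋂₀ ts := hM₀
    show (⋂₀ ts ∩ Set.range ψ).Nonempty
    rw [hg] at hM₀' ⊢
    have hgne : g ≠ 0 := fun h0 => hM₀' (h0 ▸ M₀.1.zero_mem)
    have hx : ∃ x, (g : X → ℝ) x ≠ 0 := by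
      by_contra hz; push_neg at hz
      exact hgne (Subtype.ext (funext fun x => hz x))
    obtain ⟨x, hx⟩ := hx
    exact ⟨ψ x, fun hgM => hx ((hψmem x g).1 hgM), ⟨x, rfl⟩⟩
  refine ⟨Fh, ⟨hcont, funext hcomp⟩, ?_⟩
  rintro F' ⟨hF'c, hF'ψ⟩
  refine Continuous.ext_on hdense hF'c hcont ?_
  rintro p ⟨x, rfl⟩
  exact (congrFun hF'ψ x).trans (hcomp x).symm
end

section
/- Let X be a T_4 space (normal and Hausdorff). The map η : B_1*(X) → C(M(B_1(X)), ℝ) sending each bounded Baire one function f to its unique continuous extension f̂ (the unique continuous function on M(B_1(X)) satisfying f̂ ∘ ψ = f) is a ring isomorphism of B_1*(X) onto the ring C(M(B_1(X)), ℝ) of continuous real-valued functions on M(B_1(X)). In particular, B_1*(X) is isomorphic to the ring of all continuous real-valued functions on a compact Hausdorff space. -/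
open Filter Topology

section B1auxSection

variable {X : Type*} [TopologicalSpace X]

lemma comp_mem_baireOne {f : X → ℝ} (hf : f ∈ baireOne X) {φ : ℝ → ℝ} (hφ : Continuous φ) :
    (fun x => φ (f x)) ∈ baireOne X := by
  obtain ⟨F, hF⟩ := hf
  exact ⟨fun n => ⟨fun x => φ (F n x), hφ.comp (F n).continuous⟩,
    fun x => (hφ.tendsto (f x)).comp (hF x)⟩

lemma const_mem_baireOne (r : ℝ) : (fun _ : X => r) ∈ baireOne X :=
  ⟨fun _ => ContinuousMap.const X r, fun x => tendsto_const_nhds⟩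

lemma inv_mem_baireOne {f : X → ℝ} (hf : f ∈ baireOne X) (h0 : ∀ x, f x ≠ 0) :
    (fun x => (f x)⁻¹) ∈ baireOne X := by
  obtain ⟨F, hF⟩ := hf
  refine ⟨fun n => ⟨fun x => F n x / ((F n x) ^ 2 + (1 / (n + 1))), ?_⟩, fun x => ?_⟩
  · apply Continuous.div (F n).continuous
    · exact ((F n).continuous.pow 2).add continuous_const
    · intro x
      have : (0:ℝ) < (F n x) ^ 2 + (1 / (n + 1)) := by positivity
      exact this.ne'
  · have hd : Tendsto (fun n : ℕ => (F n x) ^ 2 + (1 / (n + 1 : ℝ))) atTop (𝓝 (f x ^ 2)) := by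
      simpa using ((hF x).pow 2).add tendsto_one_div_add_atTop_nhds_zero_nat
    have h2 : f x ^ 2 ≠ 0 := pow_ne_zero 2 (h0 x)
    have := (hF x).div hd h2
    have heq : f x / f x ^ 2 = (f x)⁻¹ := by
      field_simp [pow_two]
    rwa [heq] at this

namespace B1aux

variable (X) in
/-- positive part `(f - c)⁺` as an element of `baireOne X`. -/
noncomputable def pp (f : ↥(baireOne X)) (c : ℝ) : ↥(baireOne X) :=
  ⟨fun x => max ((f : X → ℝ) x - c) 0,
    comp_mem_baireOne f.2 ((continuous_id.sub continuous_const).max continuous_const)⟩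

variable (X) in
/-- `(c - f)⁺` as an element of `baireOne X`. -/
noncomputable def np (f : ↥(baireOne X)) (c : ℝ) : ↥(baireOne X) :=
  ⟨fun x => max (c - (f : X → ℝ) x) 0,
    comp_mem_baireOne f.2 ((continuous_const.sub continuous_id).max continuous_const)⟩

variable (X) in
/-- `(|f - r| - ε)⁺` as an element of `baireOne X`. -/
noncomputable def qq (f : ↥(baireOne X)) (r ε : ℝ) : ↥(baireOne X) :=
  ⟨fun x => max (|(f : X → ℝ) x - r| - ε) 0,
    comp_mem_baireOne f.2 ((((continuous_id.sub continuous_const).abs).sub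
      continuous_const).max continuous_const)⟩

@[simp] lemma pp_apply (f : ↥(baireOne X)) (c : ℝ) (x : X) :
    ((pp X f c : ↥(baireOne X)) : X → ℝ) x = max ((f : X → ℝ) x - c) 0 := rfl
@[simp] lemma np_apply (f : ↥(baireOne X)) (c : ℝ) (x : X) :
    ((np X f c : ↥(baireOne X)) : X → ℝ) x = max (c - (f : X → ℝ) x) 0 := rfl
@[simp] lemma qq_apply (f : ↥(baireOne X)) (r ε : ℝ) (x : X) :
    ((qq X f r ε : ↥(baireOne X)) : X → ℝ) x = max (|(f : X → ℝ) x - r| - ε) 0 := rfl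

lemma exists_mul_inv {f : ↥(baireOne X)} (h : ∀ x, (f : X → ℝ) x ≠ 0) :
    ∃ g : ↥(baireOne X), f * g = 1 := by
  refine ⟨⟨fun x => ((f : X → ℝ) x)⁻¹, inv_mem_baireOne f.2 h⟩, ?_⟩
  ext x
  exact mul_inv_cancel₀ (h x)

lemma not_mem_of_nonvanishing {M : Ideal ↥(baireOne X)} (hM : M ≠ ⊤)
    {f : ↥(baireOne X)} (h : ∀ x, (f : X → ℝ) x ≠ 0) : f ∉ M := by
  intro hfM
  obtain ⟨g, hg⟩ := exists_mul_inv h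
  exact hM (Ideal.eq_top_of_isUnit_mem M hfM (IsUnit.of_mul_eq_one _ hg))

/-- maximal ideals of `baireOne X` are z-ideals. -/
lemma zmem {M : Ideal ↥(baireOne X)} (hM : M.IsMaximal) {g f : ↥(baireOne X)}
    (hg : g ∈ M) (h : ∀ x, (g : X → ℝ) x = 0 → (f : X → ℝ) x = 0) : f ∈ M := by
  by_contra hf
  obtain ⟨b, c, hc, heq⟩ := hM.exists_inv hf
  have hu : c * c + g * g ∈ M := M.add_mem (M.mul_mem_left c hc) (M.mul_mem_left g hg)
  refine not_mem_of_nonvanishing hM.ne_top (f := c * c + g * g) (fun x hx => ?_) hu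
  have hx' : ((c : X → ℝ) x) * ((c : X → ℝ) x) + ((g : X → ℝ) x) * ((g : X → ℝ) x) = 0 := by
    simpa using hx
  have hc0 : (c : X → ℝ) x = 0 ∧ (g : X → ℝ) x = 0 := by
    constructor <;> nlinarith [mul_self_nonneg ((c : X → ℝ) x), mul_self_nonneg ((g : X → ℝ) x)]
  have hf0 : (f : X → ℝ) x = 0 := h x hc0.2
  have h1 : (b : X → ℝ) x * (f : X → ℝ) x + (c : X → ℝ) x = 1 := by
    simpa using congrFun (congrArg (Subtype.val) heq) x
  rw [hf0, hc0.1] at h1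
  norm_num at h1

/-- `Ev M f r` : "`f̂(M) = r`". -/
def Ev (M : Ideal ↥(baireOne X)) (f : ↥(baireOne X)) (r : ℝ) : Prop :=
  ∀ ε > 0, qq X f r ε ∈ M

lemma Ev.unique {M : Ideal ↥(baireOne X)} (hM : M.IsMaximal) {f : ↥(baireOne X)} {r r' : ℝ}
    (h1 : Ev M f r) (h2 : Ev M f r') : r = r' := by
  by_contra hne
  set ε := |r - r'| / 3 with hε
  have hεpos : 0 < ε := by
    have : r - r' ≠ 0 := sub_ne_zero.mpr hne
    have := abs_pos.mpr this
    positivity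
  have hsum : qq X f r ε + qq X f r' ε ∈ M := M.add_mem (h1 ε hεpos) (h2 ε hεpos)
  refine not_mem_of_nonvanishing hM.ne_top (fun x hx => ?_) hsum
  have hx' : max (|(f : X → ℝ) x - r| - ε) 0 + max (|(f : X → ℝ) x - r'| - ε) 0 = 0 := by
    simpa using hx
  have h3 : |r - r'| ≤ |(f : X → ℝ) x - r| + |(f : X → ℝ) x - r'| := by
    have h := abs_sub ((f : X → ℝ) x - r') ((f : X → ℝ) x - r)
    have he : ((f : X → ℝ) x - r') - ((f : X → ℝ) x - r) = r - r' := by ring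
    rw [he] at h
    linarith
  have hm1 : max (|(f : X → ℝ) x - r| - ε) 0 ≥ 0 := le_max_right _ _
  have hm2 : max (|(f : X → ℝ) x - r'| - ε) 0 ≥ 0 := le_max_right _ _
  have c1 : max (|(f : X → ℝ) x - r| - ε) 0 ≥ |(f : X → ℝ) x - r| - ε := le_max_left _ _
  have c2 : max (|(f : X → ℝ) x - r'| - ε) 0 ≥ |(f : X → ℝ) x - r'| - ε := le_max_left _ _
  nlinarith [abs_nonneg ((f : X → ℝ) x - r), abs_nonneg ((f : X → ℝ) x - r')]

end B1aux

namespace B1aux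
variable {X : Type*} [TopologicalSpace X]

lemma max_eq_zero_of {a : ℝ} (h : a ≤ 0) : max a 0 = 0 := max_eq_right h

lemma Ev.exists {M : Ideal ↥(baireOne X)} (hM : M.IsMaximal) {f : ↥(baireOne X)} {C : ℝ}
    (hb : ∀ x, |(f : X → ℝ) x| ≤ C) : ∃ r, Ev M f r := by
  classical
  set S : Set ℝ := {c | pp X f c ∈ M} with hS
  have hCS : C ∈ S := by
    have : pp X f C = 0 := by
      ext x
      exact max_eq_zero_of (by linarith [abs_le.mp (hb x) |>.2])
    simpa [hS, Set.mem_setOf_eq, this] using M.zero_mem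
  have hne : S.Nonempty := ⟨C, hCS⟩
  have hbdd : BddBelow S := by
    refine ⟨-C - 1, fun c hc => ?_⟩
    by_contra hlt
    push_neg at hlt
    refine not_mem_of_nonvanishing hM.ne_top (f := pp X f c) (fun x => ?_) hc
    have h1 : (f : X → ℝ) x - c ≥ 1 := by
      have := abs_le.mp (hb x) |>.1
      linarith
    simp only [pp_apply]
    rw [max_eq_left (by linarith)]
    linarith
  have hup : ∀ c ∈ S, ∀ d, c ≤ d → d ∈ S := by
    intro c hc d hcd
    refine zmem hM hc (fun x hx => ?_)
    simp only [pp_apply] at hx ⊢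
    rcases max_eq_iff.mp hx with ⟨h, -⟩ | ⟨h, h2⟩
    · rw [max_eq_right] <;> linarith
    · rw [max_eq_right] <;> linarith
  set r₀ := sInf S with hr₀
  refine ⟨r₀, fun ε hε => ?_⟩
  have hmem1 : pp X f (r₀ + ε) ∈ M := by
    obtain ⟨c, hcS, hclt⟩ : ∃ c ∈ S, c < r₀ + ε := by
      rcases (csInf_lt_iff hbdd hne).mp (by linarith : sInf S < r₀ + ε) with ⟨c, h1, h2⟩
      exact ⟨c, h1, h2⟩
    exact hup c hcS _ hclt.le
  have hmem2 : np X f (r₀ - ε) ∈ M := by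
    have hnotS : r₀ - ε / 2 ∉ S := by
      intro hmem
      have := csInf_le hbdd hmem
      rw [← hr₀] at this
      linarith
    have hprod : pp X f (r₀ - ε / 2) * np X f (r₀ - ε) = 0 := by
      ext x
      have : ((pp X f (r₀ - ε / 2) * np X f (r₀ - ε) : ↥(baireOne X)) : X → ℝ) x
          = max ((f : X → ℝ) x - (r₀ - ε / 2)) 0 * max ((r₀ - ε) - (f : X → ℝ) x) 0 := rfl
      rw [this]
      rcases le_or_gt ((f : X → ℝ) x) (r₀ - ε / 2) with h | h
      · rw [max_eq_zero_of (by linarith)]; simp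
      · rw [max_eq_zero_of (a := (r₀ - ε) - (f : X → ℝ) x) (by linarith)]; simp
    have h0M : pp X f (r₀ - ε / 2) * np X f (r₀ - ε) ∈ M := by rw [hprod]; exact M.zero_mem
    rcases hM.isPrime.mem_or_mem h0M with h | h
    · exact absurd h hnotS
    · exact h
  have heq : qq X f r₀ ε = pp X f (r₀ + ε) + np X f (r₀ - ε) := by
    ext x
    show max (|(f : X → ℝ) x - r₀| - ε) 0
      = max ((f : X → ℝ) x - (r₀ + ε)) 0 + max ((r₀ - ε) - (f : X → ℝ) x) 0
    rcases abs_cases ((f : X → ℝ) x - r₀) with ⟨h1, h2⟩ | ⟨h1, h2⟩ <;> rw [h1]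
    · rw [max_eq_zero_of (a := (r₀ - ε) - (f : X → ℝ) x) (by linarith)]
      have : (f : X → ℝ) x - r₀ - ε = (f : X → ℝ) x - (r₀ + ε) := by ring
      rw [this]; ring
    · rw [max_eq_zero_of (a := (f : X → ℝ) x - (r₀ + ε)) (by linarith)]
      have : -((f : X → ℝ) x - r₀) - ε = (r₀ - ε) - (f : X → ℝ) x := by ring
      rw [this]; ring
  rw [heq]
  exact M.add_mem hmem1 hmem2

lemma Ev.le {M : Ideal ↥(baireOne X)} (hM : M.IsMaximal) {f : ↥(baireOne X)} {r c : ℝ}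
    (h : Ev M f r) (hc : pp X f c ∈ M) : r ≤ c := by
  by_contra hlt
  push_neg at hlt
  set ε := (r - c) / 3 with hε
  have hεpos : 0 < ε := by simp [hε]; linarith
  have hsum : pp X f c + qq X f r ε ∈ M := M.add_mem hc (h ε hεpos)
  refine not_mem_of_nonvanishing hM.ne_top (fun x hx => ?_) hsum
  have hx' : max ((f : X → ℝ) x - c) 0 + max (|(f : X → ℝ) x - r| - ε) 0 = 0 := by
    simpa using hx
  rcases le_or_gt ((f : X → ℝ) x) (c + ε) with hcase | hcase
  · have : 2 * ε ≤ |(f : X → ℝ) x - r| := by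
      rw [abs_sub_comm]
      exact le_trans (by linarith [hε] : 2 * ε ≤ r - (f : X → ℝ) x) (le_abs_self _)
    nlinarith [le_max_left (|(f : X → ℝ) x - r| - ε) 0, le_max_right ((f : X → ℝ) x - c) 0,
      le_max_right (|(f : X → ℝ) x - r| - ε) 0]
  · nlinarith [le_max_left ((f : X → ℝ) x - c) 0, le_max_right (|(f : X → ℝ) x - r| - ε) 0,
      le_max_right ((f : X → ℝ) x - c) 0]

lemma Ev.ge {M : Ideal ↥(baireOne X)} (hM : M.IsMaximal) {f : ↥(baireOne X)} {r c : ℝ}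
    (h : Ev M f r) (hc : np X f c ∈ M) : c ≤ r := by
  by_contra hlt
  push_neg at hlt
  set ε := (c - r) / 3 with hε
  have hεpos : 0 < ε := by simp [hε]; linarith
  have hsum : np X f c + qq X f r ε ∈ M := M.add_mem hc (h ε hεpos)
  refine not_mem_of_nonvanishing hM.ne_top (fun x hx => ?_) hsum
  have hx' : max (c - (f : X → ℝ) x) 0 + max (|(f : X → ℝ) x - r| - ε) 0 = 0 := by
    simpa using hx
  rcases le_or_gt (c - ε) ((f : X → ℝ) x) with hcase | hcase
  · have : 2 * ε ≤ |(f : X → ℝ) x - r| :=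
      le_trans (by linarith [hε] : 2 * ε ≤ (f : X → ℝ) x - r) (le_abs_self _)
    nlinarith [le_max_left (|(f : X → ℝ) x - r| - ε) 0, le_max_right (c - (f : X → ℝ) x) 0,
      le_max_right (|(f : X → ℝ) x - r| - ε) 0]
  · nlinarith [le_max_left (c - (f : X → ℝ) x) 0, le_max_right (|(f : X → ℝ) x - r| - ε) 0,
      le_max_right (c - (f : X → ℝ) x) 0]

end B1aux

namespace B1aux
variable {X : Type*} [TopologicalSpace X]

lemma abs_le_of_qq_zero {f : ↥(baireOne X)} {r δ : ℝ} {x : X}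
    (h : ((qq X f r δ : ↥(baireOne X)) : X → ℝ) x = 0) : |(f : X → ℝ) x - r| ≤ δ := by
  simp only [qq_apply] at h
  rcases max_eq_iff.mp h with ⟨h1, -⟩ | ⟨-, h1⟩
  · linarith [abs_nonneg ((f : X → ℝ) x - r)]
  · linarith

lemma Ev.add {M : Ideal ↥(baireOne X)} (hM : M.IsMaximal) {f g : ↥(baireOne X)} {r s : ℝ}
    (hf : Ev M f r) (hg : Ev M g s) : Ev M (f + g) (r + s) := by
  intro ε hε
  have hsum : qq X f r (ε / 2) + qq X g s (ε / 2) ∈ M :=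
    M.add_mem (hf _ (by linarith)) (hg _ (by linarith))
  refine zmem hM hsum (fun x hx => ?_)
  have h0 : ((qq X f r (ε/2) : ↥(baireOne X)) : X → ℝ) x = 0 ∧
      ((qq X g s (ε/2) : ↥(baireOne X)) : X → ℝ) x = 0 := by
    have hx' : max (|(f : X → ℝ) x - r| - ε/2) 0 + max (|(g : X → ℝ) x - s| - ε/2) 0 = 0 := by
      simpa using hx
    constructor <;> simp only [qq_apply] <;>
      [skip; skip] <;>
      · have m1 := le_max_right (|(f : X → ℝ) x - r| - ε/2) (0:ℝ)
        have m2 := le_max_right (|(g : X → ℝ) x - s| - ε/2) (0:ℝ)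
        linarith
  have h1 := abs_le_of_qq_zero h0.1
  have h2 := abs_le_of_qq_zero h0.2
  simp only [qq_apply]
  apply max_eq_zero_of
  have : |((f + g : ↥(baireOne X)) : X → ℝ) x - (r + s)| ≤ ε := by
    have he : ((f + g : ↥(baireOne X)) : X → ℝ) x = (f : X → ℝ) x + (g : X → ℝ) x := rfl
    rw [he]
    have : (f : X → ℝ) x + (g : X → ℝ) x - (r + s)
        = ((f : X → ℝ) x - r) + ((g : X → ℝ) x - s) := by ring
    rw [this]
    exact (abs_add_le _ _).trans (by linarith)
  linarith

lemma Ev.mul {M : Ideal ↥(baireOne X)} (hM : M.IsMaximal) {f g : ↥(baireOne X)} {r s : ℝ}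
    (hf : Ev M f r) (hg : Ev M g s) : Ev M (f * g) (r * s) := by
  intro ε hε
  set δ := min 1 (ε / (|r| + |s| + 1)) with hδ
  have hδpos : 0 < δ := by
    apply lt_min one_pos
    positivity
  have hδ1 : δ ≤ 1 := min_le_left _ _
  have hδ2 : (|r| + |s| + 1) * δ ≤ ε := by
    have h1 : δ ≤ ε / (|r| + |s| + 1) := min_le_right _ _
    have h2 : (0:ℝ) < |r| + |s| + 1 := by positivity
    calc (|r| + |s| + 1) * δ ≤ (|r| + |s| + 1) * (ε / (|r| + |s| + 1)) := by
          exact mul_le_mul_of_nonneg_left h1 h2.le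
      _ = ε := by field_simp
  have hsum : qq X f r δ + qq X g s δ ∈ M := M.add_mem (hf _ hδpos) (hg _ hδpos)
  refine zmem hM hsum (fun x hx => ?_)
  have hx' : max (|(f : X → ℝ) x - r| - δ) 0 + max (|(g : X → ℝ) x - s| - δ) 0 = 0 := by
    simpa using hx
  have m1 := le_max_right (|(f : X → ℝ) x - r| - δ) (0:ℝ)
  have m2 := le_max_right (|(g : X → ℝ) x - s| - δ) (0:ℝ)
  have h1 : |(f : X → ℝ) x - r| ≤ δ := by
    have := le_max_left (|(f : X → ℝ) x - r| - δ) (0:ℝ)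
    linarith
  have h2 : |(g : X → ℝ) x - s| ≤ δ := by
    have := le_max_left (|(g : X → ℝ) x - s| - δ) (0:ℝ)
    linarith
  simp only [qq_apply]
  apply max_eq_zero_of
  have he : ((f * g : ↥(baireOne X)) : X → ℝ) x = (f : X → ℝ) x * (g : X → ℝ) x := rfl
  rw [he]
  have key : |(f : X → ℝ) x * (g : X → ℝ) x - r * s| ≤ ε := by
    have hdecomp : (f : X → ℝ) x * (g : X → ℝ) x - r * s
        = (f : X → ℝ) x * ((g : X → ℝ) x - s) + s * ((f : X → ℝ) x - r) := by ring
    have hfb : |(f : X → ℝ) x| ≤ |r| + δ := by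
      have := abs_sub_abs_le_abs_sub ((f : X → ℝ) x) r
      linarith
    calc |(f : X → ℝ) x * (g : X → ℝ) x - r * s|
        ≤ |(f : X → ℝ) x * ((g : X → ℝ) x - s)| + |s * ((f : X → ℝ) x - r)| := by
          rw [hdecomp]; exact abs_add_le _ _
      _ = |(f : X → ℝ) x| * |(g : X → ℝ) x - s| + |s| * |(f : X → ℝ) x - r| := by
          rw [abs_mul, abs_mul]
      _ ≤ (|r| + δ) * δ + |s| * δ := by
          apply add_le_add
          · exact mul_le_mul hfb h2 (abs_nonneg _) (by positivity)
          · exact mul_le_mul_of_nonneg_left h1 (abs_nonneg _)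
      _ ≤ (|r| + |s| + 1) * δ := by nlinarith [abs_nonneg r, abs_nonneg s]
      _ ≤ ε := hδ2
  linarith

lemma Ev.one {M : Ideal ↥(baireOne X)} : Ev M (1 : ↥(baireOne X)) 1 := by
  intro ε hε
  have : qq X (1 : ↥(baireOne X)) 1 ε = 0 := by
    ext x
    show max (|(1:ℝ) - 1| - ε) 0 = (0 : X → ℝ) x
    simp [max_eq_zero_of, hε.le]
  rw [this]
  exact M.zero_mem

lemma Ev.bound {M : Ideal ↥(baireOne X)} (hM : M.IsMaximal) {f : ↥(baireOne X)} {r C : ℝ}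
    (h : Ev M f r) (hb : ∀ x, |(f : X → ℝ) x| ≤ C) : |r| ≤ C := by
  have h1 : r ≤ C := by
    refine h.le hM ?_
    have : pp X f C = 0 := by
      ext x
      show max ((f : X → ℝ) x - C) 0 = (0 : X → ℝ) x
      exact max_eq_zero_of (by linarith [(abs_le.mp (hb x)).2])
    rw [this]; exact M.zero_mem
  have h2 : -C ≤ r := by
    refine h.ge hM ?_
    have : np X f (-C) = 0 := by
      ext x
      show max (-C - (f : X → ℝ) x) 0 = (0 : X → ℝ) x
      exact max_eq_zero_of (by linarith [(abs_le.mp (hb x)).1])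
    rw [this]; exact M.zero_mem
  exact abs_le.mpr ⟨h2, h1⟩

end B1aux

namespace B1aux

lemma structSpace_compact (R : Type*) [CommRing R] : CompactSpace (StructSpace R) := by
  constructor
  rw [isCompact_iff_ultrafilter_le_nhds]
  intro 𝒰 _
  classical
  set I : Ideal R :=
    { carrier := {g : R | {N : StructSpace R | g ∈ N.1} ∈ 𝒰}
      add_mem' := by
        intro a b ha hb
        refine Filter.mem_of_superset (Filter.inter_mem ha hb) ?_
        rintro N ⟨h1, h2⟩
        exact N.1.add_mem h1 h2
      zero_mem' := by
        have : {N : StructSpace R | (0:R) ∈ N.1} = Set.univ := by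
          ext N; simp [N.1.zero_mem]
        simp only [Set.mem_setOf_eq, this]
        exact Filter.univ_mem
      smul_mem' := by
        intro c x hx
        refine Filter.mem_of_superset hx ?_
        intro N hN
        exact N.1.mul_mem_left c hN } with hI
  have hne : I ≠ ⊤ := by
    intro htop
    have h1 : (1:R) ∈ I := htop ▸ Submodule.mem_top
    have : {N : StructSpace R | (1:R) ∈ N.1} = ∅ := by
      ext N
      simp only [Set.mem_setOf_eq, Set.mem_empty_iff_false, iff_false]
      exact fun hh => N.2.ne_top ((Ideal.eq_top_iff_one _).mpr hh)
    have h2 : {N : StructSpace R | (1:R) ∈ N.1} ∈ 𝒰 := h1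
    rw [this] at h2
    exact Filter.empty_notMem (𝒰 : Filter (StructSpace R)) h2
  obtain ⟨Mx, hMmax, hIM⟩ := Ideal.exists_le_maximal I hne
  refine ⟨(⟨Mx, hMmax⟩ : StructSpace R), trivial, ?_⟩
  erw [TopologicalSpace.nhds_generateFrom]
  refine le_iInf₂ (fun s hs => ?_)
  obtain ⟨hMs, g, rfl⟩ := hs
  rw [Filter.le_principal_iff]
  have hgI : g ∉ I := fun hgmem => hMs (hIM hgmem)
  have : {N : StructSpace R | g ∈ N.1} ∉ 𝒰 := hgI
  have hcompl := (Ultrafilter.compl_mem_iff_notMem.mpr this)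
  exact hcompl

end B1aux

namespace B1aux
variable {X : Type*} [TopologicalSpace X]

/-- The underlying `baireOne` element of a `baireOneStar` element. -/
def toB1 (f : ↥(baireOneStar X)) : ↥(baireOne X) := ⟨f.1, f.2.1⟩

@[simp] lemma toB1_apply (f : ↥(baireOneStar X)) (x : X) :
    ((toB1 f : ↥(baireOne X)) : X → ℝ) x = (f : X → ℝ) x := rfl

lemma toB1_add (f g : ↥(baireOneStar X)) : toB1 (f + g) = toB1 f + toB1 g := rfl
lemma toB1_mul (f g : ↥(baireOneStar X)) : toB1 (f * g) = toB1 f * toB1 g := rfl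
lemma toB1_one : toB1 (1 : ↥(baireOneStar X)) = 1 := rfl

lemma hat_ex (f : ↥(baireOneStar X)) (M : StructSpace ↥(baireOne X)) :
    ∃ r, Ev M.1 (toB1 f) r := by
  obtain ⟨C, hC⟩ := f.2.2
  exact Ev.exists (f := toB1 f) M.2 hC

noncomputable def hat (f : ↥(baireOneStar X)) (M : StructSpace ↥(baireOne X)) : ℝ :=
  (hat_ex f M).choose

lemma hat_spec (f : ↥(baireOneStar X)) (M : StructSpace ↥(baireOne X)) :
    Ev M.1 (toB1 f) (hat f M) :=
  (hat_ex f M).choose_spec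

lemma hat_eq_of_ev {f : ↥(baireOneStar X)} {M : StructSpace ↥(baireOne X)} {r : ℝ}
    (h : Ev M.1 (toB1 f) r) : hat f M = r :=
  Ev.unique M.2 (hat_spec f M) h

lemma hat_bound {f : ↥(baireOneStar X)} {C : ℝ} (hb : ∀ x, |(f : X → ℝ) x| ≤ C)
    (M : StructSpace ↥(baireOne X)) : |hat f M| ≤ C :=
  Ev.bound M.2 (hat_spec f M) hb

lemma hat_continuous (f : ↥(baireOneStar X)) : Continuous (hat f) := by
  rw [continuous_iff_continuousAt]
  intro M₀
  rw [ContinuousAt, Metric.tendsto_nhds]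
  intro ε hε
  set r₀ := hat f M₀ with hr₀
  set s₁ := np X (toB1 f) (r₀ + ε/2) with hs₁
  set s₂ := pp X (toB1 f) (r₀ - ε/2) with hs₂
  set U : Set (StructSpace ↥(baireOne X)) :=
    {N | s₁ ∉ N.1} ∩ {N | s₂ ∉ N.1} with hU
  have hUopen : IsOpen U := by
    apply IsOpen.inter <;> exact TopologicalSpace.isOpen_generateFrom_of_mem ⟨_, rfl⟩
  have hM₀U : M₀ ∈ U := by
    constructor
    · intro hmem
      have := (hat_spec f M₀).ge M₀.2 hmem
      rw [← hr₀] at this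
      linarith
    · intro hmem
      have := (hat_spec f M₀).le M₀.2 hmem
      rw [← hr₀] at this
      linarith
  refine Filter.mem_of_superset (hUopen.mem_nhds hM₀U) (fun N hN => ?_)
  obtain ⟨hN1, hN2⟩ := hN
  -- s₁ ∉ N ⇒ pp (r₀ + ε/2) ∈ N ⇒ hat f N ≤ r₀ + ε/2
  have hub : hat f N ≤ r₀ + ε/2 := by
    have hprod : s₁ * pp X (toB1 f) (r₀ + ε/2) = 0 := by
      ext x
      show max ((r₀ + ε/2) - ((toB1 f : ↥(baireOne X)) : X → ℝ) x) 0 *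
        max (((toB1 f : ↥(baireOne X)) : X → ℝ) x - (r₀ + ε/2)) 0 = (0 : X → ℝ) x
      rcases le_or_gt (((toB1 f : ↥(baireOne X)) : X → ℝ) x) (r₀ + ε/2) with h | h
      · rw [max_eq_zero_of (a := ((toB1 f : ↥(baireOne X)) : X → ℝ) x - (r₀ + ε/2))
          (by linarith)]; simp
      · rw [max_eq_zero_of (a := (r₀ + ε/2) - ((toB1 f : ↥(baireOne X)) : X → ℝ) x)
          (by linarith)]; simp
    have h0 : s₁ * pp X (toB1 f) (r₀ + ε/2) ∈ N.1 := by rw [hprod]; exact N.1.zero_mem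
    rcases N.2.isPrime.mem_or_mem h0 with h | h
    · exact absurd h hN1
    · exact (hat_spec f N).le N.2 h
  have hlb : r₀ - ε/2 ≤ hat f N := by
    have hprod : s₂ * np X (toB1 f) (r₀ - ε/2) = 0 := by
      ext x
      show max (((toB1 f : ↥(baireOne X)) : X → ℝ) x - (r₀ - ε/2)) 0 *
        max ((r₀ - ε/2) - ((toB1 f : ↥(baireOne X)) : X → ℝ) x) 0 = (0 : X → ℝ) x
      rcases le_or_gt (((toB1 f : ↥(baireOne X)) : X → ℝ) x) (r₀ - ε/2) with h | h
      · rw [max_eq_zero_of (a := ((toB1 f : ↥(baireOne X)) : X → ℝ) x - (r₀ - ε/2))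
          (by linarith)]; simp
      · rw [max_eq_zero_of (a := (r₀ - ε/2) - ((toB1 f : ↥(baireOne X)) : X → ℝ) x)
          (by linarith)]; simp
    have h0 : s₂ * np X (toB1 f) (r₀ - ε/2) ∈ N.1 := by rw [hprod]; exact N.1.zero_mem
    rcases N.2.isPrime.mem_or_mem h0 with h | h
    · exact absurd h hN2
    · exact (hat_spec f N).ge N.2 h
  simp only [Set.mem_setOf_eq, Real.dist_eq]
  have : |hat f N - r₀| ≤ ε/2 := abs_le.mpr ⟨by linarith, by linarith⟩
  linarith

end B1aux

namespace B1aux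
variable {X : Type*} [TopologicalSpace X]

noncomputable def etaFun (f : ↥(baireOneStar X)) : C(StructSpace ↥(baireOne X), ℝ) :=
  ⟨hat f, hat_continuous f⟩

@[simp] lemma etaFun_apply (f : ↥(baireOneStar X)) (M : StructSpace ↥(baireOne X)) :
    etaFun f M = hat f M := rfl

noncomputable def etaHom : ↥(baireOneStar X) →+* C(StructSpace ↥(baireOne X), ℝ) :=
  RingHom.mk'
    { toFun := etaFun
      map_one' := ContinuousMap.ext fun M => hat_eq_of_ev (by rw [toB1_one]; exact Ev.one)
      map_mul' := fun f g => ContinuousMap.ext fun M => by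
        show hat (f * g) M = hat f M * hat g M
        refine hat_eq_of_ev ?_
        rw [toB1_mul]
        exact Ev.mul M.2 (hat_spec f M) (hat_spec g M) }
    (fun f g => ContinuousMap.ext fun M => by
      show hat (f + g) M = hat f M + hat g M
      refine hat_eq_of_ev ?_
      rw [toB1_add]
      exact Ev.add M.2 (hat_spec f M) (hat_spec g M))

@[simp] lemma etaHom_apply (f : ↥(baireOneStar X)) (M : StructSpace ↥(baireOne X)) :
    etaHom f M = hat f M := rfl

lemma hat_psi {ψ : X → StructSpace ↥(baireOne X)}
    (hψ : ∀ x : X, ((ψ x).1 : Set ↥(baireOne X)) = {g : ↥(baireOne X) | (g : X → ℝ) x = 0})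
    (f : ↥(baireOneStar X)) (x : X) : hat f (ψ x) = (f : X → ℝ) x := by
  refine hat_eq_of_ev (fun ε hε => ?_)
  rw [← SetLike.mem_coe, hψ x]
  show max (|(f : X → ℝ) x - (f : X → ℝ) x| - ε) 0 = 0
  simp [max_eq_zero_of, hε.le]

lemma etaHom_injective {ψ : X → StructSpace ↥(baireOne X)}
    (hψ : ∀ x : X, ((ψ x).1 : Set ↥(baireOne X)) = {g : ↥(baireOne X) | (g : X → ℝ) x = 0}) :
    Function.Injective (etaHom (X := X)) := by
  intro f g hfg
  ext x
  have := congrArg (fun h : C(StructSpace ↥(baireOne X), ℝ) => h (ψ x)) hfg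
  simpa [hat_psi hψ] using this

lemma sq_sum_zero {p q : ℝ} (h : p * p + q * q = 0) : p = 0 ∧ q = 0 := by
  constructor <;> nlinarith [mul_self_nonneg p, mul_self_nonneg q]

/-- Separation: distinct maximal ideals are separated by some `hat` function. -/
lemma exists_sep {M M' : StructSpace ↥(baireOne X)} (hne : M ≠ M') :
    ∃ f : ↥(baireOneStar X), hat f M = 0 ∧ hat f M' = 1 := by
  have hMM' : ¬ M.1 ≤ M'.1 := by
    intro hle
    exact hne (Subtype.ext (M.2.eq_of_le M'.2.ne_top hle))
  obtain ⟨a, haM, haM'⟩ := SetLike.not_le_iff_exists.mp hMM'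
  clear hMM'
  obtain ⟨h, b, hbM', heq⟩ := M'.2.exists_inv haM'
  have hnz : ∀ x, ((a * a + b * b : ↥(baireOne X)) : X → ℝ) x ≠ 0 := by
    intro x hx
    have hx' : (a : X → ℝ) x * (a : X → ℝ) x + (b : X → ℝ) x * (b : X → ℝ) x = 0 := by
      simpa using hx
    obtain ⟨ha0, hb0⟩ := sq_sum_zero hx'
    have h1 : (h : X → ℝ) x * (a : X → ℝ) x + (b : X → ℝ) x = 1 := by
      simpa using congrFun (congrArg (Subtype.val) heq) x
    rw [ha0, hb0] at h1
    norm_num at h1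
  obtain ⟨v, hv⟩ := exists_mul_inv hnz
  set c : ↥(baireOne X) := a * a * v with hc
  have hvx : ∀ x, ((a : X → ℝ) x * (a : X → ℝ) x + (b : X → ℝ) x * (b : X → ℝ) x)
      * (v : X → ℝ) x = 1 := by
    intro x
    simpa using congrFun (congrArg (Subtype.val) hv) x
  have hcx : ∀ x, (c : X → ℝ) x = (a : X → ℝ) x * (a : X → ℝ) x * (v : X → ℝ) x :=
    fun x => rfl
  have hc01 : ∀ x, 0 ≤ (c : X → ℝ) x ∧ (c : X → ℝ) x ≤ 1 := by
    intro x
    have hnn : (0:ℝ) ≤ (a : X → ℝ) x * (a : X → ℝ) x + (b : X → ℝ) x * (b : X → ℝ) x := by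
      nlinarith [mul_self_nonneg ((a : X → ℝ) x), mul_self_nonneg ((b : X → ℝ) x)]
    have hpos : 0 < (a : X → ℝ) x * (a : X → ℝ) x + (b : X → ℝ) x * (b : X → ℝ) x :=
      lt_of_le_of_ne hnn (fun hh => hnz x (by simpa using hh.symm))
    have hvpos : 0 < (v : X → ℝ) x := by nlinarith [hvx x]
    constructor
    · rw [hcx x]
      exact mul_nonneg (mul_self_nonneg _) hvpos.le
    · rw [hcx x]
      nlinarith [hvx x, mul_nonneg (mul_self_nonneg ((b : X → ℝ) x)) hvpos.le]
  have hcb : ∀ x, |(c : X → ℝ) x| ≤ 1 := by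
    intro x
    rw [abs_le]
    exact ⟨by linarith [(hc01 x).1], (hc01 x).2⟩
  refine ⟨⟨c.1, c.2, 1, hcb⟩, ?_, ?_⟩
  · refine hat_eq_of_ev (fun ε hε => ?_)
    refine zmem M.2 haM (fun x hx => ?_)
    show max (|(c : X → ℝ) x - 0| - ε) 0 = 0
    rw [hcx x, hx]
    simp [max_eq_zero_of, hε.le]
  · refine hat_eq_of_ev (fun ε hε => ?_)
    refine zmem M'.2 hbM' (fun x hx => ?_)
    show max (|(c : X → ℝ) x - 1| - ε) 0 = 0
    have hx1 : (c : X → ℝ) x = 1 := by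
      have h2 := hvx x
      rw [hx] at h2
      rw [hcx x]
      nlinarith [h2]
    rw [hx1]
    simp [max_eq_zero_of, hε.le]

end B1aux

namespace B1aux
variable {X : Type*} [TopologicalSpace X]

lemma clamp_bound (c t : ℝ) (hc : 0 ≤ c) : |max (min t c) (-c)| ≤ c := by
  rw [abs_le]
  constructor
  · exact le_max_right _ _
  · exact max_le (min_le_right _ _) (by linarith)

lemma clamp_eq (c t : ℝ) (ht : |t| ≤ c) : max (min t c) (-c) = t := by
  rw [abs_le] at ht
  rw [min_eq_left ht.2, max_eq_left ht.1]

lemma baireOne_of_unif (f : X → ℝ) (g : ℕ → X → ℝ) (hg : ∀ n, g n ∈ baireOne X)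
    (hclose : ∀ n x, |g n x - f x| ≤ (1/2:ℝ)^n) : f ∈ baireOne X := by
  classical
  set h : ℕ → X → ℝ := fun k x => g (k+1) x - g k x with hh
  have hhb : ∀ k x, |h k x| ≤ 2 * (1/2:ℝ)^k := by
    intro k x
    have h1 := hclose (k+1) x
    have h2 := hclose k x
    have h3 : (1/2:ℝ)^(k+1) ≤ (1/2:ℝ)^k := by
      rw [pow_succ]
      nlinarith [pow_nonneg (by norm_num : (0:ℝ) ≤ 1/2) k]
    have : |h k x| ≤ |g (k+1) x - f x| + |g k x - f x| := by
      have : h k x = (g (k+1) x - f x) - (g k x - f x) := by show g (k+1) x - g k x = _; ring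
      rw [this]
      exact abs_sub _ _
    linarith
  have hmem : ∀ k, h k ∈ baireOne X := fun k => (baireOne X).sub_mem (hg (k+1)) (hg k)
  choose F hF using hmem
  obtain ⟨G0, hG0⟩ := hg 0
  set c : ℕ → ℝ := fun k => 2 * (1/2:ℝ)^k with hcdef
  have hcpos : ∀ k, 0 ≤ c k := fun k => by positivity
  set H' : ℕ → ℕ → C(X, ℝ) := fun k n =>
    ⟨fun x => max (min (F k n x) (c k)) (-(c k)),
      ((F k n).continuous.min continuous_const).max continuous_const⟩ with hH'def
  have hH'bd : ∀ k n x, |H' k n x| ≤ c k := fun k n x => clamp_bound _ _ (hcpos k)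
  have hH'lim : ∀ k x, Tendsto (fun n => H' k n x) atTop (𝓝 (h k x)) := by
    intro k x
    have hcont : Continuous (fun t : ℝ => max (min t (c k)) (-(c k))) :=
      (continuous_id.min continuous_const).max continuous_const
    have := (hcont.tendsto (h k x)).comp (hF k x)
    rwa [clamp_eq _ _ (hhb k x)] at this
  refine ⟨fun n => ⟨fun x => G0 n x + ∑ k ∈ Finset.range n, H' k n x,
    (G0 n).continuous.add (continuous_finset_sum _ fun k _ => (H' k n).continuous)⟩, ?_⟩
  intro x
  rw [Metric.tendsto_nhds]
  intro ε hε
  obtain ⟨K, hK⟩ : ∃ K : ℕ, (1/2:ℝ)^K < ε/32 := by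
    exact exists_pow_lt_of_lt_one (x := ε/32) (y := (1/2:ℝ)) (by linarith) (by norm_num)
  have E1 : ∀ᶠ n in atTop, |G0 n x - g 0 x| < ε/4 := by
    have := (hG0 x).sub (tendsto_const_nhds (x := g 0 x))
    rw [sub_self] at this
    have habs := this.abs
    rw [abs_zero] at habs
    have := (Metric.tendsto_nhds.mp habs) (ε/4) (by linarith)
    refine this.mono (fun n hn => ?_)
    rwa [Real.dist_eq, sub_zero, abs_abs] at hn
  have E2 : ∀ᶠ n in atTop, ∑ k ∈ Finset.range K, |H' k n x - h k x| < ε/4 := by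
    have hsum : Tendsto (fun n => ∑ k ∈ Finset.range K, |H' k n x - h k x|) atTop (𝓝 0) := by
      have : Tendsto (fun n => ∑ k ∈ Finset.range K, |H' k n x - h k x|) atTop
          (𝓝 (∑ k ∈ Finset.range K, (0:ℝ))) := by
        refine tendsto_finset_sum _ (fun k _ => ?_)
        have := ((hH'lim k x).sub (tendsto_const_nhds (x := h k x))).abs
        rwa [sub_self, abs_zero] at this
      simpa using this
    have := (Metric.tendsto_nhds.mp hsum) (ε/4) (by linarith)
    refine this.mono (fun n hn => ?_)
    rw [Real.dist_eq, sub_zero] at hn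
    exact lt_of_le_of_lt (le_abs_self _) hn
  have E3 : ∀ᶠ n in atTop, |g n x - f x| < ε/4 := by
    have hp : Tendsto (fun n : ℕ => (1/2:ℝ)^n) atTop (𝓝 0) :=
      tendsto_pow_atTop_nhds_zero_of_lt_one (by norm_num) (by norm_num)
    have := (Metric.tendsto_nhds.mp hp) (ε/4) (by linarith)
    refine this.mono (fun n hn => ?_)
    rw [Real.dist_eq, sub_zero] at hn
    calc |g n x - f x| ≤ (1/2:ℝ)^n := hclose n x
      _ ≤ |(1/2:ℝ)^n| := le_abs_self _
      _ < ε/4 := hn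
  have E4 : ∀ᶠ n : ℕ in atTop, K ≤ n := Filter.eventually_ge_atTop K
  filter_upwards [E1, E2, E3, E4] with n h1 h2 h3 h4
  rw [Real.dist_eq]
  have hts : ∑ k ∈ Finset.range n, h k x = g n x - g 0 x := by
    simpa [hh] using Finset.sum_range_sub (fun k => g k x) n
  have hsplit : (G0 n x + ∑ k ∈ Finset.range n, H' k n x) - f x
      = (G0 n x - g 0 x) + (∑ k ∈ Finset.range n, (H' k n x - h k x)) + (g n x - f x) := by
    rw [Finset.sum_sub_distrib, hts]
    ring
  have htail : ∑ k ∈ Finset.Ico K n, |H' k n x - h k x| ≤ 8 * (1/2:ℝ)^K := by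
    have hb : ∀ k ∈ Finset.Ico K n, |H' k n x - h k x| ≤ 4 * (1/2:ℝ)^k := by
      intro k _
      have := abs_sub (H' k n x) (h k x)
      have h5 := hH'bd k n x
      have h6 := hhb k x
      simp only [hcdef] at h5
      linarith
    calc ∑ k ∈ Finset.Ico K n, |H' k n x - h k x|
        ≤ ∑ k ∈ Finset.Ico K n, 4 * (1/2:ℝ)^k := Finset.sum_le_sum hb
      _ = 4 * ∑ k ∈ Finset.Ico K n, (1/2:ℝ)^k := by rw [Finset.mul_sum]
      _ ≤ 4 * (2 * (1/2:ℝ)^K) := by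
          have : ∑ k ∈ Finset.Ico K n, (1/2:ℝ)^k ≤ 2 * (1/2:ℝ)^K := by
            rw [Finset.sum_Ico_eq_sum_range]
            have : ∀ j ∈ Finset.range (n - K), (1/2:ℝ)^(K + j) = (1/2:ℝ)^K * (1/2:ℝ)^j :=
              fun j _ => pow_add _ _ _
            rw [Finset.sum_congr rfl this, ← Finset.mul_sum]
            have hgeo := sum_geometric_two_le (n - K)
            have hKnn : (0:ℝ) ≤ (1/2:ℝ)^K := by positivity
            calc (1/2:ℝ)^K * ∑ j ∈ Finset.range (n - K), (1/2:ℝ)^j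
                ≤ (1/2:ℝ)^K * 2 := mul_le_mul_of_nonneg_left hgeo hKnn
              _ = 2 * (1/2:ℝ)^K := by ring
          linarith
      _ = 8 * (1/2:ℝ)^K := by ring
  have hsplitsum : ∑ k ∈ Finset.range n, |H' k n x - h k x|
      = ∑ k ∈ Finset.range K, |H' k n x - h k x| + ∑ k ∈ Finset.Ico K n, |H' k n x - h k x| := by
    rw [Finset.range_eq_Ico, ← Finset.sum_Ico_consecutive _ (Nat.zero_le K) h4,
      ← Finset.range_eq_Ico]
  calc |(G0 n x + ∑ k ∈ Finset.range n, H' k n x) - f x|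
      ≤ |G0 n x - g 0 x| + |∑ k ∈ Finset.range n, (H' k n x - h k x)| + |g n x - f x| := by
        rw [hsplit]
        exact (abs_add_le _ _).trans (add_le_add_left (abs_add_le _ _) _)
    _ ≤ |G0 n x - g 0 x| + (∑ k ∈ Finset.range n, |H' k n x - h k x|) + |g n x - f x| := by
        have := Finset.abs_sum_le_sum_abs (fun k => H' k n x - h k x) (Finset.range n)
        linarith
    _ < ε := by
        rw [hsplitsum]
        have : 8 * (1/2:ℝ)^K < ε/4 := by linarith
        linarith

end B1aux

namespace B1aux
variable {X : Type*} [TopologicalSpace X]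

noncomputable def constStar (r : ℝ) : ↥(baireOneStar X) :=
  ⟨fun _ => r, const_mem_baireOne r, |r|, fun _ => le_refl |r|⟩

lemma hat_const (r : ℝ) (M : StructSpace ↥(baireOne X)) : hat (constStar (X := X) r) M = r := by
  refine hat_eq_of_ev (fun ε hε => ?_)
  have : qq X (toB1 (constStar (X := X) r)) r ε = 0 := by
    ext x
    show max (|r - r| - ε) 0 = (0 : X → ℝ) x
    simp [max_eq_zero_of, hε.le]
  rw [this]
  exact Submodule.zero_mem _

lemma etaHom_surjective {ψ : X → StructSpace ↥(baireOne X)}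
    (hψ : ∀ x : X, ((ψ x).1 : Set ↥(baireOne X)) = {g : ↥(baireOne X) | (g : X → ℝ) x = 0}) :
    Function.Surjective (etaHom (X := X)) := by
  haveI : CompactSpace (StructSpace ↥(baireOne X)) := structSpace_compact _
  intro h
  -- the range of etaHom as a subalgebra
  set Salg : Subalgebra ℝ C(StructSpace ↥(baireOne X), ℝ) :=
    { carrier := Set.range (etaHom (X := X))
      mul_mem' := by
        rintro _ _ ⟨a, rfl⟩ ⟨b, rfl⟩
        exact ⟨a * b, map_mul _ _ _⟩
      add_mem' := by
        rintro _ _ ⟨a, rfl⟩ ⟨b, rfl⟩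
        exact ⟨a + b, map_add _ _ _⟩
      one_mem' := ⟨1, map_one _⟩
      zero_mem' := ⟨0, map_zero _⟩
      algebraMap_mem' := by
        intro r
        refine ⟨constStar r, ?_⟩
        ext M
        simp [Algebra.algebraMap_eq_smul_one, hat_const] } with hSalg
  have hsep : Salg.SeparatesPoints := by
    intro M M' hne
    obtain ⟨cf, hc0, hc1⟩ := exists_sep hne
    exact ⟨⇑(etaHom cf), ⟨etaHom cf, ⟨cf, rfl⟩, rfl⟩, by simp [hc0, hc1]⟩
  have htop := ContinuousMap.subalgebra_topologicalClosure_eq_top_of_separatesPoints Salg hsep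
  have hcl : h ∈ closure (Salg : Set C(StructSpace ↥(baireOne X), ℝ)) := by
    rw [← Subalgebra.topologicalClosure_coe, htop]
    trivial
  have hexist : ∀ n : ℕ, ∃ fb : ↥(baireOneStar X), dist (etaHom fb) h < (1/2:ℝ)^n := by
    intro n
    obtain ⟨b, hbS, hdist⟩ := Metric.mem_closure_iff.mp hcl ((1/2:ℝ)^n) (by positivity)
    obtain ⟨fb, rfl⟩ := hbS
    exact ⟨fb, by rwa [dist_comm]⟩
  choose Fb hFb using hexist
  set fl : X → ℝ := fun x => h (ψ x) with hfl
  have hfl_close : ∀ n x, |((Fb n : X → ℝ)) x - fl x| ≤ (1/2:ℝ)^n := by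
    intro n x
    have h1 : ((Fb n : X → ℝ)) x = etaHom (Fb n) (ψ x) := by
      rw [etaHom_apply, hat_psi hψ]
    rw [h1]
    have h2 : dist (etaHom (Fb n) (ψ x)) (h (ψ x)) ≤ dist (etaHom (Fb n)) h :=
      ContinuousMap.dist_apply_le_dist _
    rw [Real.dist_eq] at h2
    exact h2.trans (hFb n).le
  have hflB1 : fl ∈ baireOne X :=
    baireOne_of_unif fl (fun n => (Fb n : X → ℝ)) (fun n => (Fb n).2.1) hfl_close
  have hflbd : ∀ x, |fl x| ≤ ‖h‖ := by
    intro x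
    have := h.norm_coe_le_norm (ψ x)
    rwa [Real.norm_eq_abs] at this
  set flStar : ↥(baireOneStar X) := ⟨fl, hflB1, ‖h‖, hflbd⟩ with hflStar
  refine ⟨flStar, ?_⟩
  have key : ∀ n : ℕ, dist (etaHom flStar) h ≤ (1/2:ℝ)^n + (1/2:ℝ)^n := by
    intro n
    have h1 : dist (etaHom flStar) (etaHom (Fb n)) ≤ (1/2:ℝ)^n := by
      rw [dist_eq_norm, ← map_sub]
      rw [ContinuousMap.norm_le _ (by positivity)]
      intro M
      rw [Real.norm_eq_abs, etaHom_apply]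
      refine hat_bound (fun x => ?_) M
      have he : ((flStar - Fb n : ↥(baireOneStar X)) : X → ℝ) x = fl x - (Fb n : X → ℝ) x := rfl
      rw [he, abs_sub_comm]
      exact hfl_close n x
    calc dist (etaHom flStar) h
        ≤ dist (etaHom flStar) (etaHom (Fb n)) + dist (etaHom (Fb n)) h := dist_triangle _ _ _
      _ ≤ (1/2:ℝ)^n + (1/2:ℝ)^n := add_le_add h1 (hFb n).le
  have hlim : Tendsto (fun n : ℕ => (1/2:ℝ)^n + (1/2:ℝ)^n) atTop (𝓝 0) := by
    have hp : Tendsto (fun n : ℕ => (1/2:ℝ)^n) atTop (𝓝 0) :=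
      tendsto_pow_atTop_nhds_zero_of_lt_one (by norm_num) (by norm_num)
    simpa using hp.add hp
  have hd0 : dist (etaHom flStar) h ≤ 0 := ge_of_tendsto' hlim key
  exact dist_le_zero.mp hd0

end B1aux

end B1auxSection
/-- For a `T₄` space `X`, the map `f ↦ f̂` sending each bounded Baire one function to its
continuous extension along `ψ : x ↦ M_x` is a ring isomorphism from `B₁*(X)` onto the
ring of continuous real-valued functions on the (compact Hausdorff) structure space of
`B₁(X)`; i.e. `B₁*(X)` is a C-type ring. -/
theorem baireOneStar_ringEquiv_continuousFunctions
    (X : Type*) [TopologicalSpace X] [T4Space X]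
    (ψ : X → StructSpace ↥(baireOne X))
    (hψ : ∀ x : X, ((ψ x).1 : Set ↥(baireOne X)) = {g : ↥(baireOne X) | (g : X → ℝ) x = 0}) :
    ∃ η : ↥(baireOneStar X) ≃+* C(StructSpace ↥(baireOne X), ℝ),
      ∀ (f : ↥(baireOneStar X)) (x : X), η f (ψ x) = (f : X → ℝ) x := by
  refine ⟨RingEquiv.ofBijective (B1aux.etaHom (X := X))
    ⟨B1aux.etaHom_injective hψ, B1aux.etaHom_surjective hψ⟩, fun f x => ?_⟩
  show B1aux.etaHom f (ψ x) = (f : X → ℝ) x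
  rw [B1aux.etaHom_apply, B1aux.hat_psi hψ]
end
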